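/- arXiv:2206.05105 — 5 statements merged into one kernel-verified Lean document; each statement's English description precedes it below -/
import Mathlib

section
/- If f ∈ L¹(T) and the function x ↦ f(x)/x is integrable on (−π, π), then the partial sums Σ_{n=−M}^{N} a_n(f) tend to 0 as M → ∞ and N → ∞ independently. -/
open MeasureTheory Filter Real Set Topology

/-- The `n`-th Fourier coefficient of a `2π`-periodic function `f : ℝ → ℂ`,
`a_n(f) = (1/(2π)) ∫_{-π}^{π} f(x) e^{-inx} dx`. -/
noncomputable def fourierCoef (f : ℝ → ℂ) (n : ℤ) : ℂ :=
  (1 / (2 * π)) • ∫ x in (-π)..π, f x * Complex.exp (-Complex.I * (n : ℂ) * (x : ℂ))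

lemma Icc_int_insert (a b : ℤ) (h : a ≤ b + 1) :
    Finset.Icc a (b + 1) = insert (b + 1) (Finset.Icc a b) := by
  ext n; simp only [Finset.mem_Icc, Finset.mem_insert]; omega

lemma geom_sum_Icc (z : ℂ) (hz : z ≠ 0) (hz1 : z ≠ 1) (a b : ℤ) (hab : a ≤ b) :
    ∑ n ∈ Finset.Icc a b, z ^ n = (z ^ a - z ^ (b + 1)) / (1 - z) := by
  have h1 : (1 : ℂ) - z ≠ 0 := sub_ne_zero.mpr (Ne.symm hz1)
  have key : ∀ k : ℕ, ∑ n ∈ Finset.Icc a (a + k), z ^ n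
      = (z ^ a - z ^ (a + k + 1)) / (1 - z) := by
    intro k
    induction k with
    | zero =>
      simp only [Nat.cast_zero, add_zero, Finset.Icc_self, Finset.sum_singleton]
      have e : z ^ (a + 1) = z ^ a * z := by rw [zpow_add₀ hz, zpow_one]
      rw [e]; field_simp
    | succ k ih =>
      have e2 : a + ((k : ℤ) + 1) = (a + k) + 1 := by ring
      rw [Nat.cast_add, Nat.cast_one, e2,
        Icc_int_insert a (a + k) (by omega),
        Finset.sum_insert (by simp), ih]
      have e : z ^ (a + k + 1 + 1) = z ^ (a + k + 1) * z := by rw [zpow_add₀ hz, zpow_one]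
      rw [e]; field_simp; ring
  have := key (b - a).toNat
  rw [Int.toNat_of_nonneg (by omega)] at this
  simpa using this

lemma norm_one_sub_exp (x : ℝ) :
    ‖1 - Complex.exp (-Complex.I * x)‖ = 2 * |Real.sin (x / 2)| := by
  have key : 1 - Complex.exp (-Complex.I * x)
      = Complex.exp (-Complex.I * (x / 2)) *
        (Complex.exp (Complex.I * (x / 2)) - Complex.exp (-Complex.I * (x / 2))) := by
    rw [mul_sub, ← Complex.exp_add, ← Complex.exp_add]
    norm_num
    congr 1
    ring
  have key2 : Complex.exp (Complex.I * (x / 2)) - Complex.exp (-Complex.I * (x / 2))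
      = 2 * Complex.I * Complex.sin ((x : ℂ) / 2) := by
    have a1 : Complex.I * ((x:ℂ)/2) = ((x:ℂ)/2) * Complex.I := mul_comm _ _
    have a2 : -Complex.I * ((x:ℂ)/2) = (-((x:ℂ)/2)) * Complex.I := by ring
    rw [a1, a2, Complex.exp_mul_I, Complex.exp_mul_I, Complex.cos_neg, Complex.sin_neg]
    ring
  rw [key, key2, norm_mul, Complex.norm_exp]
  have : (-Complex.I * ((x:ℂ) / 2)).re = 0 := by simp
  rw [this, Real.exp_zero, one_mul, norm_mul, norm_mul, Complex.norm_two, Complex.norm_I,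
    show ((x:ℂ)/2) = ((x/2 : ℝ) : ℂ) by push_cast; ring, ← Complex.ofReal_sin,
    Complex.norm_real, Real.norm_eq_abs, mul_one]

lemma norm_one_sub_exp_ge {x : ℝ} (hx : |x| ≤ π) :
    2 / π * |x| ≤ ‖1 - Complex.exp (-Complex.I * x)‖ := by
  rw [norm_one_sub_exp]
  have hπ := Real.pi_pos
  have h1 : |x / 2| ≤ π / 2 := by rw [abs_div]; simp only [abs_two]; linarith [abs_nonneg x]
  have h2 : 2 / π * |x / 2| ≤ Real.sin |x / 2| :=
    Real.mul_le_sin (abs_nonneg _) h1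
  have h3 : Real.sin |x / 2| ≤ |Real.sin (x / 2)| := by
    rcases abs_cases (x / 2) with ⟨h, _⟩ | ⟨h, _⟩
    · rw [h]; exact le_abs_self _
    · rw [h, Real.sin_neg, ← abs_neg]; exact le_abs_self _
  have h4 : |x / 2| = |x| / 2 := by rw [abs_div, abs_two]
  rw [h4] at h2 h3
  calc 2 / π * |x| = 2 * (2 / π * (|x| / 2)) := by ring
    _ ≤ 2 * |Real.sin (x / 2)| := by linarith

lemma exp_ne_one {x : ℝ} (hx1 : -π < x) (hx2 : x ≤ π) (hx0 : x ≠ 0) :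
    Complex.exp (-Complex.I * x) ≠ 1 := by
  intro h
  rw [Complex.exp_eq_one_iff] at h
  obtain ⟨n, hn⟩ := h
  have hn' : ((-x : ℝ) : ℂ) * Complex.I = ((2 * π * n : ℝ) : ℂ) * Complex.I := by
    push_cast
    linear_combination hn
  have h2 : (-x : ℝ) = 2 * π * n := by
    exact_mod_cast mul_right_cancel₀ Complex.I_ne_zero hn'
  have hπ := Real.pi_pos
  have hn0 : n ≠ 0 := by
    rintro rfl
    rw [Int.cast_zero, mul_zero] at h2
    exact hx0 (by linarith)
  have h3 : (1 : ℝ) ≤ |(n : ℝ)| := by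
    rw [← Int.cast_abs]
    exact_mod_cast Int.one_le_abs (by omega)
  have h4 : |(-x : ℝ)| = 2 * π * |(n : ℝ)| := by
    rw [h2, abs_mul, abs_of_nonneg (by linarith : (0:ℝ) ≤ 2 * π)]
  have h5 : |(-x : ℝ)| ≤ π := by rw [abs_neg]; rw [abs_le]; constructor <;> linarith
  nlinarith

lemma RL_gen (G : ℝ → ℂ) (w : ℕ → ℝ) (hw : Tendsto w atTop (cocompact ℝ)) :
    Tendsto (fun M : ℕ => ∫ v : ℝ, G v * Complex.exp (-(2 * π * (v * w M)) * Complex.I))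
      atTop (𝓝 0) := by
  have h := (Real.tendsto_integral_exp_smul_cocompact G).comp hw
  convert h using 2 with M
  apply integral_congr_ae
  filter_upwards with v
  rw [Circle.smul_def, Real.fourierChar_apply, mul_comm]
  congr 2
  push_cast
  ring

set_option maxHeartbeats 1000000 in
lemma RL1 (G : ℝ → ℂ) :
    Tendsto (fun M : ℕ => ∫ v : ℝ, G v * Complex.exp (Complex.I * (M : ℂ) * v)) atTop (𝓝 0) := by
  have h1 : Tendsto (fun M : ℕ => (M : ℝ) / (2 * π)) atTop atTop :=
    (tendsto_natCast_atTop_atTop).atTop_div_const (by positivity)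
  have hw : Tendsto (fun M : ℕ => -((M : ℝ) / (2 * π))) atTop (cocompact ℝ) :=
    (tendsto_neg_atTop_atBot.comp h1).mono_right _root_.atBot_le_cocompact
  have h := RL_gen G _ hw
  convert h using 2 with M
  apply integral_congr_ae
  filter_upwards with v
  congr 1
  have hπ : (π : ℂ) ≠ 0 := Complex.ofReal_ne_zero.mpr Real.pi_ne_zero
  push_cast
  field_simp

set_option maxHeartbeats 1000000 in
lemma RL2 (G : ℝ → ℂ) :
    Tendsto (fun N : ℕ => ∫ v : ℝ, G v * Complex.exp (-Complex.I * (((N : ℂ)) + 1) * v))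
      atTop (𝓝 0) := by
  have h1 : Tendsto (fun N : ℕ => ((N : ℝ) + 1) / (2 * π)) atTop atTop :=
    (tendsto_atTop_add_const_right _ 1 tendsto_natCast_atTop_atTop).atTop_div_const (by positivity)
  have hw : Tendsto (fun N : ℕ => ((N : ℝ) + 1) / (2 * π)) atTop (cocompact ℝ) :=
    h1.mono_right _root_.atTop_le_cocompact
  have h := RL_gen G _ hw
  convert h using 2 with N
  apply integral_congr_ae
  filter_upwards with v
  congr 1
  have hπ : (π : ℂ) ≠ 0 := Complex.ofReal_ne_zero.mpr Real.pi_ne_zero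
  push_cast
  field_simp

set_option maxHeartbeats 1000000 in
lemma g_integrable (f : ℝ → ℂ) (hf : IntegrableOn f (Ioc (-π) π))
    (hdiv : IntegrableOn (fun x => f x / (x : ℂ)) (Ioo (-π) π)) :
    IntegrableOn (fun x => f x / (1 - Complex.exp (-Complex.I * x))) (Ioo (-π) π) := by
  have hπ := Real.pi_pos
  have hfm : AEStronglyMeasurable f (volume.restrict (Ioo (-π) π)) :=
    (hf.mono_set Ioo_subset_Ioc_self).aestronglyMeasurable
  have hcont : Continuous fun x : ℝ => (1 - Complex.exp (-Complex.I * x)) :=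
    continuous_const.sub (Complex.continuous_exp.comp (continuous_const.mul Complex.continuous_ofReal))
  have hm : AEStronglyMeasurable (fun x => f x / (1 - Complex.exp (-Complex.I * x)))
      (volume.restrict (Ioo (-π) π)) := by
    simp only [div_eq_mul_inv]
    exact hfm.mul (hcont.measurable.inv.aestronglyMeasurable)
  refine Integrable.mono' ((hdiv.norm).const_mul (π / 2)) hm ?_
  have h0 : (volume.restrict (Ioo (-π) π)) {(0 : ℝ)} = 0 := by
    rw [Measure.restrict_apply (measurableSet_singleton 0)]
    exact measure_mono_null (Set.inter_subset_left) (volume_singleton)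
  have hae0 : ∀ᵐ x ∂(volume.restrict (Ioo (-π) π)), x ≠ 0 := by
    rw [ae_iff]
    simpa using h0
  filter_upwards [hae0, ae_restrict_mem measurableSet_Ioo] with x hx0 hxmem
  have hxabs : |x| ≤ π := by
    rw [abs_le]
    exact ⟨le_of_lt hxmem.1, le_of_lt hxmem.2⟩
  have hlow : 2 / π * |x| ≤ ‖1 - Complex.exp (-Complex.I * x)‖ := norm_one_sub_exp_ge hxabs
  have hpos : 0 < 2 / π * |x| := by positivity
  rw [norm_div]
  have h2 : ‖f x‖ / ‖1 - Complex.exp (-Complex.I * x)‖ ≤ ‖f x‖ / (2 / π * |x|) :=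
    div_le_div_of_nonneg_left (norm_nonneg _) hpos hlow
  refine h2.trans (le_of_eq ?_)
  rw [norm_div, Complex.norm_real, Real.norm_eq_abs]
  have hxne : |x| ≠ 0 := abs_ne_zero.mpr hx0
  field_simp

lemma integrable_mul_exp {g : ℝ → ℂ} {s : Set ℝ} (hg : IntegrableOn g s) (w : ℂ)
    (hw : w.re = 0) : IntegrableOn (fun x : ℝ => g x * Complex.exp (w * x)) s := by
  have hcont : Continuous fun x : ℝ => Complex.exp (w * x) :=
    Complex.continuous_exp.comp (continuous_const.mul Complex.continuous_ofReal)
  have h : IntegrableOn (fun x : ℝ => Complex.exp (w * x) * g x) s := by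
    refine hg.bdd_mul hcont.aestronglyMeasurable (c := 1) (ae_of_all _ fun x => ?_)
    rw [Complex.norm_exp]
    have : (w * (x : ℂ)).re = 0 := by simp [Complex.mul_re, hw]
    rw [this, Real.exp_zero]
  exact h.congr (ae_of_all _ fun x => mul_comm _ _)

set_option maxHeartbeats 1000000 in
lemma key_eq (f : ℝ → ℂ) (hf : IntegrableOn f (Ioc (-π) π))
    (hdiv : IntegrableOn (fun x => f x / (x : ℂ)) (Ioo (-π) π)) (M N : ℕ) :
    ∑ n ∈ Finset.Icc (-(M : ℤ)) (N : ℤ), fourierCoef f n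
      = (1 / (2 * π)) •
        ((∫ v : ℝ, (Ioo (-π) π).indicator
            (fun x => f x / (1 - Complex.exp (-Complex.I * x))) v
            * Complex.exp (Complex.I * (M : ℂ) * v))
        - ∫ v : ℝ, (Ioo (-π) π).indicator
            (fun x => f x / (1 - Complex.exp (-Complex.I * x))) v
            * Complex.exp (-Complex.I * ((N : ℂ) + 1) * v)) := by
  have hπ := Real.pi_pos
  have hg : IntegrableOn (fun x : ℝ => f x / (1 - Complex.exp (-Complex.I * x)))
      (Ioo (-π) π) := g_integrable f hf hdiv
  have hMN : -(M : ℤ) ≤ (N : ℤ) := by omega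
  have hintn : ∀ n : ℤ, IntervalIntegrable
      (fun x => f x * Complex.exp (-Complex.I * (n : ℂ) * x)) volume (-π) π := by
    intro n
    rw [intervalIntegrable_iff_integrableOn_Ioc_of_le (by linarith)]
    have h := integrable_mul_exp hf (-Complex.I * (n : ℂ)) (by simp)
    exact h.congr (ae_of_all _ fun x => by simp [mul_assoc])
  have step1 : ∑ n ∈ Finset.Icc (-(M : ℤ)) (N : ℤ), fourierCoef f n
      = (1 / (2 * π)) • ∫ x in (-π)..π,
          ∑ n ∈ Finset.Icc (-(M : ℤ)) (N : ℤ),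
            f x * Complex.exp (-Complex.I * (n : ℂ) * x) := by
    unfold fourierCoef
    rw [← Finset.smul_sum, ← intervalIntegral.integral_finset_sum (fun n _ => hintn n)]
  rw [step1, intervalIntegral.integral_of_le (by linarith), integral_Ioc_eq_integral_Ioo]
  have h0 : (volume.restrict (Ioo (-π) π)) {(0 : ℝ)} = 0 := by
    rw [Measure.restrict_apply (measurableSet_singleton 0)]
    exact measure_mono_null (Set.inter_subset_left) (volume_singleton)
  have hae0 : ∀ᵐ x ∂(volume.restrict (Ioo (-π) π)), x ≠ 0 := by
    rw [ae_iff]; simpa using h0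
  have step2 : ∫ x in Ioo (-π) π,
      ∑ n ∈ Finset.Icc (-(M : ℤ)) (N : ℤ), f x * Complex.exp (-Complex.I * (n : ℂ) * x)
      = ∫ x in Ioo (-π) π,
        (f x / (1 - Complex.exp (-Complex.I * x)) * Complex.exp (Complex.I * (M : ℂ) * x)
          - f x / (1 - Complex.exp (-Complex.I * x))
              * Complex.exp (-Complex.I * ((N : ℂ) + 1) * x)) := by
    apply integral_congr_ae
    filter_upwards [hae0, ae_restrict_mem measurableSet_Ioo] with x hx0 hxmem
    have hz0 : Complex.exp (-Complex.I * (x : ℂ)) ≠ 0 := Complex.exp_ne_zero _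
    have hz1 : Complex.exp (-Complex.I * (x : ℂ)) ≠ 1 :=
      exp_ne_one hxmem.1 (le_of_lt hxmem.2) hx0
    have h1z : (1 : ℂ) - Complex.exp (-Complex.I * (x : ℂ)) ≠ 0 :=
      sub_ne_zero.mpr (Ne.symm hz1)
    have hterm : ∀ n ∈ Finset.Icc (-(M : ℤ)) (N : ℤ),
        f x * Complex.exp (-Complex.I * (n : ℂ) * x)
          = f x * Complex.exp (-Complex.I * (x : ℂ)) ^ n := by
      intro n _
      congr 1
      rw [← Complex.exp_int_mul]
      congr 1
      push_cast
      ring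
    have hE : Complex.exp (Complex.I * (M : ℂ) * x)
        = Complex.exp (-Complex.I * (x : ℂ)) ^ (-(M : ℤ)) := by
      rw [← Complex.exp_int_mul]
      congr 1
      push_cast
      ring
    have hF : Complex.exp (-Complex.I * ((N : ℂ) + 1) * x)
        = Complex.exp (-Complex.I * (x : ℂ)) ^ ((N : ℤ) + 1) := by
      rw [← Complex.exp_int_mul]
      congr 1
      push_cast
      ring
    have alg : ∀ a b c d : ℂ, d ≠ 0 → a * ((b - c) / d) = a / d * b - a / d * c := by
      intros a b c d hd
      field_simp
    rw [Finset.sum_congr rfl hterm, ← Finset.mul_sum,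
      geom_sum_Icc _ hz0 hz1 _ _ hMN, hE, hF]
    exact alg _ _ _ _ h1z
  rw [step2]
  have hgE : IntegrableOn
      (fun x : ℝ => f x / (1 - Complex.exp (-Complex.I * x))
        * Complex.exp (Complex.I * (M : ℂ) * x)) (Ioo (-π) π) := by
    have h := integrable_mul_exp hg (Complex.I * (M : ℂ)) (by simp)
    exact h.congr (ae_of_all _ fun x => by simp [mul_assoc])
  have hgF : IntegrableOn
      (fun x : ℝ => f x / (1 - Complex.exp (-Complex.I * x))
        * Complex.exp (-Complex.I * ((N : ℂ) + 1) * x)) (Ioo (-π) π) := by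
    have h := integrable_mul_exp hg (-Complex.I * ((N : ℂ) + 1)) (by simp)
    exact h.congr (ae_of_all _ fun x => by simp [mul_assoc])
  rw [integral_sub hgE hgF]
  have e1 : ∫ x in Ioo (-π) π,
      f x / (1 - Complex.exp (-Complex.I * x)) * Complex.exp (Complex.I * (M : ℂ) * x)
      = ∫ v : ℝ, (Ioo (-π) π).indicator
          (fun x => f x / (1 - Complex.exp (-Complex.I * x))) v
          * Complex.exp (Complex.I * (M : ℂ) * v) := by
    rw [← integral_indicator measurableSet_Ioo]
    refine integral_congr_ae (ae_of_all _ fun x => ?_)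
    by_cases hx : x ∈ Ioo (-π) π <;> simp [Set.indicator, hx]
  have e2 : ∫ x in Ioo (-π) π,
      f x / (1 - Complex.exp (-Complex.I * x)) * Complex.exp (-Complex.I * ((N : ℂ) + 1) * x)
      = ∫ v : ℝ, (Ioo (-π) π).indicator
          (fun x => f x / (1 - Complex.exp (-Complex.I * x))) v
          * Complex.exp (-Complex.I * ((N : ℂ) + 1) * v) := by
    rw [← integral_indicator measurableSet_Ioo]
    refine integral_congr_ae (ae_of_all _ fun x => ?_)
    by_cases hx : x ∈ Ioo (-π) π <;> simp [Set.indicator, hx]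
  rw [e1, e2]

/-- If `f ∈ L¹(T)` and `x ↦ f(x)/x` is integrable on `(-π, π)`, then the partial sums
`∑_{n=-M}^{N} a_n(f)` tend to `0` as `M → ∞` and `N → ∞` independently. -/
theorem sum_fourierCoef_tendsto_zero (f : ℝ → ℂ) (hper : Function.Periodic f (2 * π))
    (hf : IntegrableOn f (Ioc (-π) π))
    (hdiv : IntegrableOn (fun x => f x / (x : ℂ)) (Ioo (-π) π)) :
    Tendsto (fun MN : ℕ × ℕ =>
        ∑ n ∈ Finset.Icc (-(MN.1 : ℤ)) (MN.2 : ℤ), fourierCoef f n)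
      atTop (nhds 0) := by
  set G : ℝ → ℂ := (Ioo (-π) π).indicator
    (fun x => f x / (1 - Complex.exp (-Complex.I * x))) with hG_def
  have hkey : ∀ MN : ℕ × ℕ,
      ∑ n ∈ Finset.Icc (-(MN.1 : ℤ)) (MN.2 : ℤ), fourierCoef f n
        = (1 / (2 * π)) •
          ((∫ v : ℝ, G v * Complex.exp (Complex.I * (MN.1 : ℂ) * v))
            - ∫ v : ℝ, G v * Complex.exp (-Complex.I * ((MN.2 : ℂ) + 1) * v)) :=
    fun MN => key_eq f hf hdiv MN.1 MN.2
  have hA : Tendsto (fun M : ℕ => ∫ v : ℝ, G v * Complex.exp (Complex.I * (M : ℂ) * v))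
      atTop (nhds 0) := RL1 G
  have hB : Tendsto (fun N : ℕ => ∫ v : ℝ, G v * Complex.exp (-Complex.I * ((N : ℂ) + 1) * v))
      atTop (nhds 0) := RL2 G
  have hprod : Tendsto (fun MN : ℕ × ℕ =>
      (∫ v : ℝ, G v * Complex.exp (Complex.I * (MN.1 : ℂ) * v))
        - ∫ v : ℝ, G v * Complex.exp (-Complex.I * ((MN.2 : ℂ) + 1) * v))
      atTop (nhds 0) := by
    rw [← prod_atTop_atTop_eq]
    simpa using (hA.comp tendsto_fst).sub (hB.comp tendsto_snd)
  have := hprod.const_smul (1 / (2 * π) : ℝ)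
  rw [smul_zero] at this
  exact this.congr fun MN => (hkey MN).symm
end

section
/- If f ∈ L¹(T) and the function x ↦ (f(x) + f(−x))/x is integrable on (−π, π), then the symmetric partial sums Σ_{n=−N}^{N} a_n(f) tend to 0 as N → ∞. -/
open MeasureTheory Filter Real Set

open scoped FourierTransform

private lemma tele_sum (g : ℤ → ℂ) (N : ℕ) :
    ∑ n ∈ Finset.Icc (-(N : ℤ)) (N : ℤ), (g n - g (n - 1)) = g N - g (-(N : ℤ) - 1) := by
  induction N with
  | zero => simp
  | succ N ih =>
    have hset : Finset.Icc (-((N : ℤ) + 1)) ((N : ℤ) + 1)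
        = insert (-(N : ℤ) - 1) (insert ((N : ℤ) + 1) (Finset.Icc (-(N : ℤ)) (N : ℤ))) := by
      ext m; simp only [Finset.mem_Icc, Finset.mem_insert]; omega
    push_cast [hset]
    rw [Finset.sum_insert, Finset.sum_insert, ih]
    · have : (-(N : ℤ) - 1 - 1) = (-((N : ℤ) + 1) - 1) := by ring
      rw [this]; ring
    · simp only [Finset.mem_Icc]; omega
    · simp only [Finset.mem_insert, Finset.mem_Icc]; omega

private lemma dirichlet (N : ℕ) (x : ℝ) :
    (∑ n ∈ Finset.Icc (-(N : ℤ)) (N : ℤ), Complex.exp (-Complex.I * n * x))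
        * Complex.sin ((x : ℂ) / 2) = Complex.sin (((N : ℂ) + 1 / 2) * x) := by
  set u : ℂ := Complex.exp ((x : ℂ) / 2 * Complex.I) with hu
  have hu0 : u ≠ 0 := Complex.exp_ne_zero _
  have hupow : ∀ k : ℤ, u ^ k = Complex.exp ((k : ℂ) * ((x : ℂ) / 2 * Complex.I)) := fun k => by
    rw [hu, Complex.exp_int_mul]
  -- rewrite each exponential as a power of u
  have hterm : ∀ n : ℤ, Complex.exp (-Complex.I * (n : ℂ) * (x : ℂ)) = u ^ (-2 * n) := fun n => by
    rw [hupow]; congr 1; push_cast; ring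
  -- sin (x/2) in terms of u
  have hsinx2 : Complex.sin ((x : ℂ) / 2) = (u⁻¹ - u) * Complex.I / 2 := by
    rw [Complex.sin, hu, ← Complex.exp_neg]; ring_nf
  have hsinz : Complex.sin (((N : ℂ) + 1 / 2) * x)
      = (u ^ (-(2 * (N : ℤ)) - 1) - u ^ (2 * (N : ℤ) + 1)) * Complex.I / 2 := by
    rw [Complex.sin, hupow, hupow]
    congr 3
    · congr 1; push_cast; ring
    · congr 1; push_cast; ring
  -- telescoping identity
  have key : (∑ n ∈ Finset.Icc (-(N : ℤ)) (N : ℤ), u ^ (-2 * n)) * (u - u⁻¹)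
      = u ^ (2 * (N : ℤ) + 1) - u ^ (-(2 * (N : ℤ)) - 1) := by
    have hre : ∑ n ∈ Finset.Icc (-(N : ℤ)) (N : ℤ), u ^ (-2 * n)
        = ∑ n ∈ Finset.Icc (-(N : ℤ)) (N : ℤ), u ^ (2 * n) := by
      refine Finset.sum_equiv (Equiv.neg ℤ) (fun n => ?_) (fun n _ => ?_)
      · simp only [Finset.mem_Icc, Equiv.neg_apply]; omega
      · simp only [Equiv.neg_apply]; congr 1; ring
    rw [hre, Finset.sum_mul]
    have hterm2 : ∀ n ∈ Finset.Icc (-(N : ℤ)) (N : ℤ),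
        u ^ (2 * n) * (u - u⁻¹) = (fun m : ℤ => u ^ (2 * m + 1)) n
          - (fun m : ℤ => u ^ (2 * m + 1)) (n - 1) := by
      intro n _
      simp only
      rw [mul_sub, ← zpow_add_one₀ hu0, ← zpow_sub_one₀ hu0]
      congr 2
      ring
    rw [Finset.sum_congr rfl hterm2, tele_sum (fun m : ℤ => u ^ (2 * m + 1)) N]
    congr 2
    ring
  calc (∑ n ∈ Finset.Icc (-(N : ℤ)) (N : ℤ), Complex.exp (-Complex.I * n * x))
      * Complex.sin ((x : ℂ) / 2)
      = (∑ n ∈ Finset.Icc (-(N : ℤ)) (N : ℤ), u ^ (-2 * n)) * ((u⁻¹ - u) * Complex.I / 2) := by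
        rw [hsinx2]; congr 1; exact Finset.sum_congr rfl fun n _ => hterm n
    _ = ((∑ n ∈ Finset.Icc (-(N : ℤ)) (N : ℤ), u ^ (-2 * n)) * (u - u⁻¹)) * (-Complex.I) / 2 := by
        ring
    _ = Complex.sin (((N : ℂ) + 1 / 2) * x) := by rw [key, hsinz]; ring

private lemma alg1 (G S s : ℂ) (hs : s ≠ 0) : G / s * (S * s) = G * S := by
  field_simp

private lemma alg2 (G xx s : ℂ) (hxx : xx ≠ 0) : xx / s * (G / xx) = G / s := by
  rcases eq_or_ne s 0 with rfl | hs
  · simp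
  · field_simp

private noncomputable def Dker (N : ℕ) (x : ℝ) : ℂ :=
  ∑ n ∈ Finset.Icc (-(N : ℤ)) (N : ℤ), Complex.exp (-Complex.I * n * x)

private noncomputable def hq (f : ℝ → ℂ) (x : ℝ) : ℂ :=
  (f x + f (-x)) / ((Real.sin (x / 2) : ℝ) : ℂ)

private noncomputable def Hq (f : ℝ → ℂ) : ℝ → ℂ := (Ioo (-π) π).indicator (hq f)

private noncomputable def Fq (f : ℝ → ℂ) (w : ℝ) : ℂ := ∫ v : ℝ, 𝐞 (-(v * w)) • Hq f v

/-- If `f ∈ L¹(T)` and `x ↦ (f(x) + f(-x))/x` is integrable on `(-π, π)`, then the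
symmetric partial sums `∑_{n=-N}^{N} a_n(f)` tend to `0` as `N → ∞`. -/
theorem symmetric_sum_fourierCoef_tendsto_zero (f : ℝ → ℂ)
    (hper : Function.Periodic f (2 * π)) (hf : IntegrableOn f (Ioc (-π) π))
    (hdiv : IntegrableOn (fun x => (f x + f (-x)) / (x : ℂ)) (Ioo (-π) π)) :
    Tendsto (fun N : ℕ => ∑ n ∈ Finset.Icc (-(N : ℤ)) (N : ℤ), fourierCoef f n)
      atTop (nhds 0) := by
  have hπ : (0 : ℝ) < π := pi_pos
  have hle : -π ≤ π := by linarith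
  -- basic integrability
  have hfI : IntervalIntegrable f volume (-π) π :=
    (intervalIntegrable_iff_integrableOn_Ioc_of_le hle).2 hf
  have hfnegI : IntervalIntegrable (fun x => f (-x)) volume (-π) π := by
    simpa using ((IntervalIntegrable.iff_comp_neg (by simp)).mp hfI).symm
  have hDcont : ∀ N, Continuous (Dker N) := fun N => by
    unfold Dker
    exact continuous_finset_sum _ fun n _ =>
      Complex.continuous_exp.comp (by continuity)
  have hfD : ∀ N, IntervalIntegrable (fun x => f x * Dker N x) volume (-π) π :=
    fun N => hfI.mul_continuousOn (hDcont N).continuousOn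
  have hfnegD : ∀ N, IntervalIntegrable (fun x => f (-x) * Dker N x) volume (-π) π :=
    fun N => hfnegI.mul_continuousOn (hDcont N).continuousOn
  -- Step 1: partial sums as integral against the Dirichlet kernel
  have step1 : ∀ N : ℕ, (∑ n ∈ Finset.Icc (-(N : ℤ)) (N : ℤ), fourierCoef f n)
      = (1 / (2 * π)) • ∫ x in (-π)..π, f x * Dker N x := by
    intro N
    unfold fourierCoef
    rw [← Finset.smul_sum]
    congr 1
    rw [← intervalIntegral.integral_finset_sum]
    · unfold Dker; simp only [Finset.mul_sum]
    · intro n _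
      exact hfI.mul_continuousOn
        (Complex.continuous_exp.comp (by continuity)).continuousOn
  -- Step 2: symmetrization
  have hDeven : ∀ N (x : ℝ), Dker N (-x) = Dker N x := by
    intro N x
    unfold Dker
    refine Finset.sum_equiv (Equiv.neg ℤ) (fun n => ?_) (fun n _ => ?_)
    · simp only [Finset.mem_Icc, Equiv.neg_apply]; omega
    · simp only [Equiv.neg_apply]; congr 1; push_cast; ring
  have step2 : ∀ N, (∫ x in (-π)..π, f (-x) * Dker N x)
      = ∫ x in (-π)..π, f x * Dker N x := by
    intro N
    have h1 := intervalIntegral.integral_comp_neg (a := -π) (b := π)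
      (fun x => f x * Dker N x)
    simp only [neg_neg] at h1
    rw [← h1]
    congr 1
    funext x
    rw [hDeven]
  have step3 : ∀ N : ℕ, (∑ n ∈ Finset.Icc (-(N : ℤ)) (N : ℤ), fourierCoef f n)
      = (1 / (4 * π)) • ∫ x in (-π)..π, (f x + f (-x)) * Dker N x := by
    intro N
    rw [step1 N]
    have hsum : (∫ x in (-π)..π, (f x + f (-x)) * Dker N x)
        = (∫ x in (-π)..π, f x * Dker N x) + ∫ x in (-π)..π, f (-x) * Dker N x := by
      rw [← intervalIntegral.integral_add (hfD N) (hfnegD N)]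
      congr 1
      funext x
      ring
    rw [hsum, step2, ← two_smul ℝ, smul_smul]
    congr 1
    field_simp
    ring
  -- nonvanishing of sin (x/2)
  have hsin_ne : ∀ x : ℝ, x ∈ Ioc (-π) π → x ≠ 0 → Real.sin (x / 2) ≠ 0 := by
    intro x hx hx0
    rw [Ne, Real.sin_eq_zero_iff_of_lt_of_lt (by linarith [hx.1]) (by linarith [hx.2])]
    intro hc
    exact hx0 (by linarith)
  -- Step 4: replace the kernel by sin((N+1/2)x)/sin(x/2)
  have step4 : ∀ N : ℕ, (∫ x in (-π)..π, (f x + f (-x)) * Dker N x)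
      = ∫ x in (-π)..π, hq f x * Complex.sin (((N : ℂ) + 1 / 2) * x) := by
    intro N
    apply intervalIntegral.integral_congr_ae
    have h0 : ∀ᵐ x : ℝ, x ≠ 0 := by
      refine ae_iff.2 ?_
      simpa using measure_singleton (0 : ℝ)
    filter_upwards [h0] with x hx0 hxI
    rw [uIoc_of_le hle] at hxI
    have hs : Real.sin (x / 2) ≠ 0 := hsin_ne x hxI hx0
    have hs' : ((Real.sin (x / 2) : ℝ) : ℂ) ≠ 0 := Complex.ofReal_ne_zero.mpr hs
    have hd := dirichlet N x
    have hcast : Complex.sin ((x : ℂ) / 2) = ((Real.sin (x / 2) : ℝ) : ℂ) := by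
      rw [Complex.ofReal_sin]
      push_cast
      ring_nf
    rw [hcast] at hd
    unfold hq Dker
    rw [← hd]
    exact (alg1 _ _ _ hs').symm
  -- Step 5: integrability of hq f on Ioo (-π) π
  have haux : ∀ y : ℝ, 0 ≤ y → y ≤ π → y / π ≤ Real.sin (y / 2) := by
    intro y hy hy'
    have h1 := Real.mul_le_sin (x := y / 2) (by linarith) (by linarith)
    calc y / π = 2 / π * (y / 2) := by ring
      _ ≤ Real.sin (y / 2) := h1
  have hbound : ∀ x ∈ Ioo (-π) π, ‖(x : ℂ) / ((Real.sin (x / 2) : ℝ) : ℂ)‖ ≤ π := by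
    intro x hx
    rcases eq_or_ne x 0 with rfl | hx0
    · simp [hπ.le]
    · have h1 : |x| / π ≤ Real.sin (|x| / 2) :=
        haux |x| (abs_nonneg x) (by rw [abs_le]; constructor <;> [linarith [hx.1]; linarith [hx.2]])
      have hkey : |x| / π ≤ |Real.sin (x / 2)| := by
        rcases le_or_gt 0 x with hx' | hx'
        · rw [abs_of_nonneg hx'] at h1 ⊢
          exact h1.trans (le_abs_self _)
        · rw [abs_of_neg hx'] at h1 ⊢
          rw [show -x / 2 = -(x / 2) by ring, Real.sin_neg] at h1
          exact h1.trans (neg_le_abs _)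
      have hxpos : 0 < |x| := abs_pos.mpr hx0
      have hspos : 0 < |Real.sin (x / 2)| := lt_of_lt_of_le (by positivity) hkey
      rw [norm_div, Complex.norm_real, Complex.norm_real, Real.norm_eq_abs, Real.norm_eq_abs]
      rw [div_le_iff₀ hspos]
      have := (div_le_iff₀ hπ).mp hkey
      nlinarith
  have hψmeas : Measurable fun x : ℝ => (x : ℂ) / ((Real.sin (x / 2) : ℝ) : ℂ) := by
    apply Measurable.div
    · exact Complex.measurable_ofReal
    · exact Complex.measurable_ofReal.comp
        (Real.measurable_sin.comp (measurable_id.div_const 2))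
  have hh_int : IntegrableOn (hq f) (Ioo (-π) π) := by
    have hprod : IntegrableOn
        (fun x : ℝ => ((x : ℂ) / ((Real.sin (x / 2) : ℝ) : ℂ)) * ((f x + f (-x)) / (x : ℂ)))
        (Ioo (-π) π) := by
      apply Integrable.bdd_mul (c := π) hdiv hψmeas.aestronglyMeasurable
      exact (ae_restrict_iff' measurableSet_Ioo).2 (ae_of_all _ hbound)
    apply hprod.congr
    have h0 : ∀ᵐ x : ℝ ∂(volume.restrict (Ioo (-π) π)), x ≠ 0 := by
      apply ae_restrict_of_ae
      refine ae_iff.2 ?_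
      simpa using measure_singleton (0 : ℝ)
    filter_upwards [h0] with x hx0
    have hx0' : (x : ℂ) ≠ 0 := Complex.ofReal_ne_zero.mpr hx0
    unfold hq
    exact alg2 _ _ _ hx0'
  have hH_int : Integrable (Hq f) := by
    unfold Hq
    exact (integrable_indicator_iff measurableSet_Ioo).2 hh_int
  -- Step 7: to an integral over ℝ
  have step7 : ∀ N : ℕ, (∫ x in (-π)..π, hq f x * Complex.sin (((N : ℂ) + 1 / 2) * x))
      = ∫ x : ℝ, Hq f x * Complex.sin (((N : ℂ) + 1 / 2) * x) := by
    intro N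
    rw [intervalIntegral.integral_of_le hle, integral_Ioc_eq_integral_Ioo,
      ← integral_indicator measurableSet_Ioo]
    congr 1
    funext x
    unfold Hq
    by_cases hx : x ∈ Ioo (-π) π
    · simp [Set.indicator_of_mem hx]
    · simp [Set.indicator_of_notMem hx]
  -- character computation
  have echar : ∀ l x : ℝ, (𝐞 (-(x * (l / (2 * π)))) : Circle) • Hq f x
      = Hq f x * Complex.exp (-Complex.I * l * x) := by
    intro l x
    rw [Circle.smul_def, Real.fourierChar_apply]
    have harg : 2 * π * -(x * (l / (2 * π))) = -(x * l) := by
      field_simp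
    simp only [Circle.smul_def, smul_eq_mul, Real.fourierChar_apply]
    rw [harg, show Complex.exp (((-(x * l) : ℝ) : ℂ) * Complex.I)
      = Complex.exp (-Complex.I * l * x) from by congr 1; push_cast; ring]
    exact mul_comm _ _
  have Ig : ∀ l : ℝ, Integrable fun x : ℝ => Hq f x * Complex.exp (-Complex.I * l * x) := by
    intro l
    have h1 := (Real.fourierIntegral_convergent_iff (f := Hq f) (w := l / (2 * π))).2 hH_int
    exact h1.congr (ae_of_all _ fun x => by
      simp only [RCLike.inner_apply, conj_trivial]; rw [mul_comm (l / (2 * π))]; exact echar l x)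
  -- Step 9: express via Fq
  have step9 : ∀ N : ℕ, (∫ x : ℝ, Hq f x * Complex.sin (((N : ℂ) + 1 / 2) * x))
      = (Fq f (((N : ℝ) + 1 / 2) / (2 * π)) - Fq f (-(((N : ℝ) + 1 / 2) / (2 * π))))
          * Complex.I / 2 := by
    intro N
    set l : ℝ := (N : ℝ) + 1 / 2 with hl
    have hpoint : ∀ x : ℝ, Hq f x * Complex.sin (((N : ℂ) + 1 / 2) * x)
        = Hq f x * Complex.exp (-Complex.I * l * x) * (Complex.I / 2)
          - Hq f x * Complex.exp (-Complex.I * ((-l : ℝ) : ℂ) * x) * (Complex.I / 2) := by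
      intro x
      rw [Complex.sin]
      have e1 : -(((N : ℂ) + 1 / 2) * x) * Complex.I = -Complex.I * l * x := by
        rw [hl]; push_cast; ring
      have e2 : ((N : ℂ) + 1 / 2) * x * Complex.I = -Complex.I * ((-l : ℝ) : ℂ) * x := by
        rw [hl]; push_cast; ring
      rw [e1, e2]
      ring
    simp only [hpoint]
    rw [integral_sub ((Ig l).mul_const (Complex.I / 2)) ((Ig (-l)).mul_const (Complex.I / 2)),
      integral_mul_const, integral_mul_const]
    have hf1 : Fq f (l / (2 * π)) = ∫ x : ℝ, Hq f x * Complex.exp (-Complex.I * l * x) := by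
      unfold Fq
      exact integral_congr_ae (ae_of_all _ fun x => echar l x)
    have hf2 : Fq f (-(l / (2 * π)))
        = ∫ x : ℝ, Hq f x * Complex.exp (-Complex.I * ((-l : ℝ) : ℂ) * x) := by
      unfold Fq
      rw [show -(l / (2 * π)) = (-l) / (2 * π) by ring]
      exact integral_congr_ae (ae_of_all _ fun x => echar (-l) x)
    rw [← hf1, ← hf2]
    ring
  -- Riemann-Lebesgue
  have hRL : Tendsto (Fq f) (cocompact ℝ) (nhds 0) :=
    Real.tendsto_integral_exp_smul_cocompact (Hq f)
  have hb : Tendsto (fun N : ℕ => ((N : ℝ) + 1 / 2) / (2 * π)) atTop atTop := by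
    apply Tendsto.atTop_div_const (by positivity)
    exact tendsto_atTop_add_const_right _ _ tendsto_natCast_atTop_atTop
  have hbc : Tendsto (fun N : ℕ => ((N : ℝ) + 1 / 2) / (2 * π)) atTop (cocompact ℝ) := by
    rw [cocompact_eq_atBot_atTop]
    exact hb.mono_right le_sup_right
  have hac : Tendsto (fun N : ℕ => -(((N : ℝ) + 1 / 2) / (2 * π))) atTop (cocompact ℝ) := by
    rw [cocompact_eq_atBot_atTop]
    exact (tendsto_neg_atTop_atBot.comp hb).mono_right le_sup_left
  have key : ∀ N : ℕ, (∑ n ∈ Finset.Icc (-(N : ℤ)) (N : ℤ), fourierCoef f n)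
      = (1 / (4 * π)) • ((Fq f (((N : ℝ) + 1 / 2) / (2 * π))
          - Fq f (-(((N : ℝ) + 1 / 2) / (2 * π)))) * Complex.I / 2) := by
    intro N
    rw [step3 N, step4 N, step7 N, step9 N]
  have hlim : Tendsto (fun N : ℕ => (1 / (4 * π) : ℝ) • ((Fq f (((N : ℝ) + 1 / 2) / (2 * π))
      - Fq f (-(((N : ℝ) + 1 / 2) / (2 * π)))) * Complex.I / 2)) atTop (nhds 0) := by
    have h1 : Tendsto (fun N : ℕ => Fq f (((N : ℝ) + 1 / 2) / (2 * π))) atTop (nhds 0) :=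
      hRL.comp hbc
    have h2 : Tendsto (fun N : ℕ => Fq f (-(((N : ℝ) + 1 / 2) / (2 * π)))) atTop (nhds 0) :=
      hRL.comp hac
    have h3 := (((h1.sub h2).mul_const Complex.I).div_const 2).const_smul ((1 : ℝ) / (4 * π))
    simpa using h3
  exact hlim.congr fun N => (key N).symm
end

section
/- Wiener's theorem: let μ ∈ M(T) be a finite complex Borel measure whose atoms (point masses) are a_k = μ({x_k}), k ranging over the (at most countably many) atoms of μ. Then (1/(2N+1)) Σ_{n=−N}^{N} |μ̂(n)|² → Σ_k |a_k|² as N → ∞. Consequently, μ has no atoms if and only if (1/(2N+1)) Σ_{n=−N}^{N} |μ̂(n)|² → 0. -/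
open MeasureTheory Filter Real AddCircle
open scoped ComplexConjugate

namespace WienerAux

variable {T : ℝ} [hT : Fact (0 < T)]

lemma norm_fourier' (n : ℤ) (x : AddCircle T) : ‖fourier n x‖ = 1 := by
  rw [fourier_apply, Circle.norm_coe]

lemma fourier_ne_zero (n : ℤ) (x : AddCircle T) : fourier n x ≠ 0 := by
  intro h
  have h2 := norm_fourier' (T := T) n x
  rw [h] at h2; simp at h2

lemma fourier_neg_arg (n : ℤ) (x : AddCircle T) : fourier n (-x) = fourier (-n) x := by
  rw [fourier_apply, fourier_apply, smul_neg, ← neg_smul]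

lemma fourier_arg_add (n : ℤ) (x y : AddCircle T) :
    fourier n (x + y) = fourier n x * fourier n y := by
  rw [fourier_apply, fourier_apply, fourier_apply, smul_add, toCircle_add, Circle.coe_mul]

lemma fourier_arg_sub (n : ℤ) (x y : AddCircle T) :
    fourier n (x - y) = fourier n x * fourier (-n) y := by
  rw [sub_eq_add_neg, fourier_arg_add, fourier_neg_arg]

lemma fourier_zpow (n : ℤ) (t : AddCircle T) : fourier n t = (fourier 1 t) ^ n := by
  induction n using Int.induction_on with
  | zero => simpa using (fourier_zero (x := t))
  | succ k ih =>
      rw [fourier_add, ih, zpow_add_one₀ (fourier_ne_zero 1 t)]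
  | pred k ih =>
      rw [sub_eq_add_neg, fourier_add, ih, zpow_add₀ (fourier_ne_zero 1 t)]
      congr 1
      rw [zpow_neg, zpow_one, fourier_neg]
      exact (Complex.inv_eq_conj (norm_fourier' 1 t)).symm

lemma dirichlet_sum (z : ℂ) (hz : z ≠ 0) (N : ℕ) :
    (z - 1) * ∑ n ∈ Finset.Icc (-(N : ℤ)) (N : ℤ), z ^ n
      = z ^ ((N : ℤ) + 1) - z ^ (-(N : ℤ)) := by
  induction N with
  | zero => simp [zpow_one]
  | succ N ih =>
      have h1 : Finset.Icc (-(N + 1 : ℕ) : ℤ) ((N + 1 : ℕ) : ℤ)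
          = insert (-(N + 1 : ℕ) : ℤ) (insert ((N + 1 : ℕ) : ℤ)
              (Finset.Icc (-(N : ℤ)) (N : ℤ))) := by
        ext m
        simp only [Finset.mem_Icc, Finset.mem_insert]
        push_cast
        omega
      have h2 : (-(N + 1 : ℕ) : ℤ) ∉ insert ((N + 1 : ℕ) : ℤ) (Finset.Icc (-(N : ℤ)) (N : ℤ)) := by
        simp only [Finset.mem_insert, Finset.mem_Icc]
        push_cast
        omega
      have h3 : ((N + 1 : ℕ) : ℤ) ∉ Finset.Icc (-(N : ℤ)) (N : ℤ) := by
        simp only [Finset.mem_Icc]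
        push_cast
        omega
      rw [h1, Finset.sum_insert h2, Finset.sum_insert h3, mul_add, mul_add, ih]
      have e1 : z ^ (((N : ℕ) + 1 : ℕ) + 1 : ℤ) = z ^ ((N : ℤ) + 1) * z := by
        rw [← zpow_add_one₀ hz]
        norm_num
      have e2 : z ^ (-(N : ℤ)) = z ^ (-((N : ℕ) + 1 : ℕ) : ℤ) * z := by
        rw [← zpow_add_one₀ hz]
        norm_num
      have e3 : z ^ (-((N : ℕ) + 1 : ℕ) : ℤ) = z ^ (-((N:ℤ)) - 1) := by push_cast; ring_nf
      have e4 : z ^ (((N : ℕ) + 1 : ℕ) : ℤ) = z ^ ((N:ℤ) + 1) := by push_cast; ring_nf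
      push_cast at e1 e2 e3 e4 ⊢
      rw [e1, e2, e3, e4]
      ring


variable {T : ℝ} [hT : Fact (0 < T)]

lemma card_Icc_real (N : ℕ) : ((Finset.Icc (-(N : ℤ)) (N : ℤ)).card : ℝ) = 2 * (N : ℝ) + 1 := by
  rw [Int.card_Icc]
  have : ((N : ℤ) + 1 - -(N : ℤ)).toNat = 2 * N + 1 := by omega
  rw [this]
  push_cast
  ring

lemma two_n_one_pos (N : ℕ) : (0 : ℝ) < 2 * (N : ℝ) + 1 := by positivity

lemma sum_fourier_neg_eq (N : ℕ) (f : ℤ → ℂ) :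
    ∑ n ∈ Finset.Icc (-(N : ℤ)) (N : ℤ), f (-n) = ∑ n ∈ Finset.Icc (-(N : ℤ)) (N : ℤ), f n := by
  refine Finset.sum_nbij' (fun i => -i) (fun i => -i) ?_ ?_ ?_ ?_ ?_ <;>
    intros <;> simp_all [Finset.mem_Icc] <;> omega

lemma dir_bound (N : ℕ) (t : AddCircle T) :
    ‖(((2 * (N : ℝ) + 1 : ℝ) : ℂ))⁻¹ * ∑ n ∈ Finset.Icc (-(N : ℤ)) (N : ℤ), fourier (-n) t‖
      ≤ 1 := by
  rw [norm_mul, norm_inv, Complex.norm_real, Real.norm_eq_abs,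
    abs_of_pos (two_n_one_pos N)]
  have h1 : ‖∑ n ∈ Finset.Icc (-(N : ℤ)) (N : ℤ), (fourier (-n)) t‖ ≤ 2 * (N : ℝ) + 1 := by
    calc ‖∑ n ∈ Finset.Icc (-(N : ℤ)) (N : ℤ), (fourier (-n)) t‖
        ≤ ∑ n ∈ Finset.Icc (-(N : ℤ)) (N : ℤ), ‖(fourier (-n)) t‖ := norm_sum_le _ _
      _ = ∑ n ∈ Finset.Icc (-(N : ℤ)) (N : ℤ), 1 := by
          exact Finset.sum_congr rfl fun n _ => norm_fourier' _ _
      _ = 2 * (N : ℝ) + 1 := by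
          rw [Finset.sum_const, nsmul_eq_mul, mul_one, card_Icc_real]
  rw [inv_mul_le_iff₀ (two_n_one_pos N), mul_one]
  exact h1

lemma dir_tendsto (t : AddCircle T) :
    Tendsto (fun N : ℕ =>
        (((2 * (N : ℝ) + 1 : ℝ) : ℂ))⁻¹ * ∑ n ∈ Finset.Icc (-(N : ℤ)) (N : ℤ), fourier (-n) t)
      atTop (nhds (if t = 0 then 1 else 0)) := by
  by_cases ht : t = 0
  · rw [if_pos ht, ht]
    have heq : ∀ N : ℕ,
        (((2 * (N : ℝ) + 1 : ℝ) : ℂ))⁻¹ *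
          ∑ n ∈ Finset.Icc (-(N : ℤ)) (N : ℤ), fourier (-n) (0 : AddCircle T) = 1 := by
      intro N
      have : ∑ n ∈ Finset.Icc (-(N : ℤ)) (N : ℤ), fourier (-n) (0 : AddCircle T)
          = ((2 * (N : ℝ) + 1 : ℝ) : ℂ) := by
        calc ∑ n ∈ Finset.Icc (-(N : ℤ)) (N : ℤ), fourier (-n) (0 : AddCircle T)
            = ∑ n ∈ Finset.Icc (-(N : ℤ)) (N : ℤ), (1 : ℂ) :=
              Finset.sum_congr rfl fun n _ => fourier_eval_zero (-n)
          _ = ((Finset.Icc (-(N : ℤ)) (N : ℤ)).card : ℂ) := by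
              rw [Finset.sum_const, nsmul_eq_mul, mul_one]
          _ = ((2 * (N : ℝ) + 1 : ℝ) : ℂ) := by
              rw [← card_Icc_real N]
              norm_cast
      rw [this, inv_mul_cancel₀]
      exact_mod_cast (two_n_one_pos N).ne'
    rw [tendsto_congr heq]
    exact tendsto_const_nhds
  · rw [if_neg ht]
    set z : ℂ := fourier 1 t with hzdef
    have hz0 : z ≠ 0 := fourier_ne_zero 1 t
    have hznorm : ‖z‖ = 1 := norm_fourier' 1 t
    have hz1 : z ≠ 1 := by
      intro h
      apply ht
      have h2 : toCircle t = toCircle (0 : AddCircle T) := by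
        have e1 : (toCircle t : ℂ) = (toCircle (0 : AddCircle T) : ℂ) := by
          rw [← fourier_one, ← fourier_one, ← hzdef, h, fourier_eval_zero]
        exact Subtype.ext e1
      exact injective_toCircle hT.out.ne' h2
    have hsum : ∀ N : ℕ, ∑ n ∈ Finset.Icc (-(N : ℤ)) (N : ℤ), fourier (-n) t
        = ∑ n ∈ Finset.Icc (-(N : ℤ)) (N : ℤ), z ^ n := by
      intro N
      rw [show (∑ n ∈ Finset.Icc (-(N : ℤ)) (N : ℤ), fourier (-n) t)
          = ∑ n ∈ Finset.Icc (-(N : ℤ)) (N : ℤ), (fun m => z ^ m) (-n) from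
        Finset.sum_congr rfl fun n _ => by rw [fourier_zpow, ← hzdef]]
      exact sum_fourier_neg_eq N _
    have hbound : ∀ N : ℕ, ‖∑ n ∈ Finset.Icc (-(N : ℤ)) (N : ℤ), z ^ n‖ ≤ 2 / ‖z - 1‖ := by
      intro N
      have hne : (0 : ℝ) < ‖z - 1‖ := by
        rw [norm_pos_iff]
        exact sub_ne_zero.mpr hz1
      rw [le_div_iff₀ hne, mul_comm]
      have h3 : ‖z - 1‖ * ‖∑ n ∈ Finset.Icc (-(N : ℤ)) (N : ℤ), z ^ n‖
          = ‖z ^ ((N : ℤ) + 1) - z ^ (-(N : ℤ))‖ := by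
        rw [← norm_mul, dirichlet_sum z hz0 N]
      rw [h3]
      have h4 : ∀ k : ℤ, ‖z ^ k‖ = 1 := by
        intro k
        rw [norm_zpow, hznorm, one_zpow]
      calc ‖z ^ ((N : ℤ) + 1) - z ^ (-(N : ℤ))‖
          ≤ ‖z ^ ((N : ℤ) + 1)‖ + ‖z ^ (-(N : ℤ))‖ := norm_sub_le _ _
        _ = 2 := by rw [h4, h4]; norm_num
    have hb : ∀ N : ℕ,
        ‖(((2 * (N : ℝ) + 1 : ℝ) : ℂ))⁻¹ * ∑ n ∈ Finset.Icc (-(N : ℤ)) (N : ℤ), fourier (-n) t‖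
          ≤ (2 / ‖z - 1‖) * (2 * (N : ℝ) + 1)⁻¹ := by
      intro N
      rw [norm_mul, norm_inv, Complex.norm_real, Real.norm_eq_abs, abs_of_pos (two_n_one_pos N),
        hsum N, mul_comm]
      exact mul_le_mul (hbound N) le_rfl (by positivity) (by positivity)
    have h5 : Tendsto (fun N : ℕ => 2 * (N : ℝ) + 1) atTop atTop := by
      apply Filter.tendsto_atTop_add_const_right
      exact Tendsto.const_mul_atTop two_pos tendsto_natCast_atTop_atTop
    have h6 := h5.inv_tendsto_atTop
    have h7 := h6.const_mul (2 / ‖z - 1‖)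
    exact squeeze_zero_norm hb (by simpa using h7)

end WienerAux

open WienerAux

instance : Fact (0 < 2 * π) := ⟨Real.two_pi_pos⟩

/-- Wiener's theorem on `T`. A finite complex Borel measure `μ` on `T` is represented as
`dμ = w dν` with `ν` a finite positive Borel measure and `w` a `ν`-integrable complex
density (every finite complex measure has this form, e.g. with `ν = |μ|`). Its
Fourier–Stieltjes coefficients are `μ̂(n) = ∫ e^{-inx} dμ(x) = ∫ e^{-inx} w(x) dν(x)`,
and its point mass at `x` is `μ({x}) = ∫_{{x}} w dν`. Then
`(1/(2N+1)) ∑_{n=-N}^{N} |μ̂(n)|² → ∑_x |μ({x})|²` (the sum over the atoms of `μ`);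
consequently `μ` has no atoms iff `(1/(2N+1)) ∑_{n=-N}^{N} |μ̂(n)|² → 0`. -/
theorem wiener_theorem (ν : Measure (AddCircle (2 * π))) [IsFiniteMeasure ν]
    (w : AddCircle (2 * π) → ℂ) (hw : Integrable w ν) :
    Tendsto
      (fun N : ℕ => (1 / (2 * (N : ℝ) + 1)) *
        ∑ n ∈ Finset.Icc (-(N : ℤ)) (N : ℤ), ‖∫ x, (fourier (-n)) x * w x ∂ν‖ ^ 2)
      atTop
      (nhds (∑' x : AddCircle (2 * π), ‖∫ t in ({x} : Set (AddCircle (2 * π))), w t ∂ν‖ ^ 2)) ∧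
    ((∀ x : AddCircle (2 * π), ∫ t in ({x} : Set (AddCircle (2 * π))), w t ∂ν = 0) ↔
      Tendsto
        (fun N : ℕ => (1 / (2 * (N : ℝ) + 1)) *
          ∑ n ∈ Finset.Icc (-(N : ℤ)) (N : ℤ), ‖∫ x, (fourier (-n)) x * w x ∂ν‖ ^ 2)
        atTop (nhds 0)) := by
  let W : AddCircle (2 * π) × AddCircle (2 * π) → ℂ := fun p => w p.1 * (starRingEnd ℂ) (w p.2)
  let a : AddCircle (2 * π) → ℂ := fun x => ∫ t in ({x} : Set (AddCircle (2 * π))), w t ∂ν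
  have ha : ∀ x : AddCircle (2 * π), a x = (ν {x}).toReal • w x := fun x => integral_singleton w x
  -- integrability of conj w and of W
  have hwc : Integrable (fun x => (starRingEnd ℂ) (w x)) ν := by
    refine ⟨?_, hw.2.congr' ?_⟩
    · exact Complex.continuous_conj.comp_aestronglyMeasurable hw.1
    · filter_upwards with x
      rw [RCLike.norm_conj]
  have hW : Integrable W (ν.prod ν) := hw.mul_prod hwc
  -- Fourier coefficients
  let c : ℤ → ℂ := fun n => ∫ x, (fourier (-n)) x * w x ∂ν
  -- kernel-multiplied integrands
  have hf_int : ∀ n : ℤ,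
      Integrable (fun p : AddCircle (2 * π) × AddCircle (2 * π) =>
        fourier (-n) (p.1 - p.2) * W p) (ν.prod ν) := by
    intro n
    refine hW.bdd_mul (c := 1) ?_ (Eventually.of_forall fun p => le_of_eq (norm_fourier' _ _))
    exact ((map_continuous (fourier (-n))).comp
      (continuous_fst.sub continuous_snd)).aestronglyMeasurable
  -- the complex averaged sequence
  let G : ℕ → ℂ := fun N => ∫ p, (((2 * (N : ℝ) + 1 : ℝ) : ℂ))⁻¹ *
      (∑ n ∈ Finset.Icc (-(N : ℤ)) (N : ℤ), fourier (-n) (p.1 - p.2)) * W p ∂(ν.prod ν)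
  -- identification of the integrals of the summands
  have hkey : ∀ n : ℤ,
      (∫ p, fourier (-n) (p.1 - p.2) * W p ∂(ν.prod ν)) = c n * (starRingEnd ℂ) (c n) := by
    intro n
    have hptw : ∀ p : AddCircle (2 * π) × AddCircle (2 * π), fourier (-n) (p.1 - p.2) * W p
        = (fun x => fourier (-n) x * w x) p.1 *
          (fun y => fourier n y * (starRingEnd ℂ) (w y)) p.2 := by
      intro p
      simp only [W]
      rw [fourier_arg_sub, neg_neg]
      ring
    have h1 : (∫ p, fourier (-n) (p.1 - p.2) * W p ∂(ν.prod ν))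
        = ∫ p : AddCircle (2 * π) × AddCircle (2 * π),
            (fun x => fourier (-n) x * w x) p.1 *
            (fun y => fourier n y * (starRingEnd ℂ) (w y)) p.2 ∂(ν.prod ν) :=
      integral_congr_ae (Eventually.of_forall hptw)
    have hc : (starRingEnd ℂ) (c n) = ∫ y, fourier n y * (starRingEnd ℂ) (w y) ∂ν := by
      show (starRingEnd ℂ) (∫ x, (fourier (-n)) x * w x ∂ν) = _
      rw [← integral_conj]
      refine integral_congr_ae (Eventually.of_forall fun y => ?_)
      show (starRingEnd ℂ) ((fourier (-n)) y * w y) = (fourier n) y * (starRingEnd ℂ) (w y)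
      rw [map_mul]
      congr 1
      rw [fourier_neg, Complex.conj_conj]
    rw [h1, integral_prod_mul (μ := ν) (ν := ν)
      (fun x : AddCircle (2 * π) => (fourier (-n)) x * w x)
      (fun y : AddCircle (2 * π) => (fourier n) y * (starRingEnd ℂ) (w y)), ← hc]
  -- G N as the averaged sum of |c n|²
  have hG : ∀ N : ℕ, G N = (((2 * (N : ℝ) + 1 : ℝ) : ℂ))⁻¹ *
      ∑ n ∈ Finset.Icc (-(N : ℤ)) (N : ℤ), c n * (starRingEnd ℂ) (c n) := by
    intro N
    have h1 : G N = (((2 * (N : ℝ) + 1 : ℝ) : ℂ))⁻¹ *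
        ∫ p, ∑ n ∈ Finset.Icc (-(N : ℤ)) (N : ℤ), fourier (-n) (p.1 - p.2) * W p ∂(ν.prod ν) := by
      rw [← integral_const_mul]
      refine integral_congr_ae (Eventually.of_forall fun p => ?_)
      simp only [Finset.sum_mul, mul_assoc]
    rw [h1, integral_finset_sum _ fun n _ => hf_int n]
    congr 1
    exact Finset.sum_congr rfl fun n _ => hkey n
  -- the real sequence equals re ∘ G
  have hR : ∀ N : ℕ, (1 / (2 * (N : ℝ) + 1)) *
      ∑ n ∈ Finset.Icc (-(N : ℤ)) (N : ℤ), ‖∫ x, (fourier (-n)) x * w x ∂ν‖ ^ 2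
        = (G N).re := by
    intro N
    rw [hG N]
    have h2 : ∑ n ∈ Finset.Icc (-(N : ℤ)) (N : ℤ), c n * (starRingEnd ℂ) (c n)
        = ((∑ n ∈ Finset.Icc (-(N : ℤ)) (N : ℤ), ‖c n‖ ^ 2 : ℝ) : ℂ) := by
      rw [Complex.ofReal_sum]
      refine Finset.sum_congr rfl fun n _ => ?_
      rw [Complex.mul_conj, Complex.normSq_eq_norm_sq]
    rw [h2, ← Complex.ofReal_inv, ← Complex.ofReal_mul, Complex.ofReal_re, one_div]
  -- dominated convergence
  have hdiag : MeasurableSet (Set.diagonal (AddCircle (2 * π))) :=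
    isClosed_diagonal.measurableSet
  have hf0_int : Integrable ((Set.diagonal (AddCircle (2 * π))).indicator W) (ν.prod ν) :=
    hW.indicator hdiag
  have hG_tendsto : Tendsto G atTop
      (nhds (∫ p, (Set.diagonal (AddCircle (2 * π))).indicator W p ∂(ν.prod ν))) := by
    refine tendsto_integral_of_dominated_convergence (fun p => ‖W p‖) ?_ hW.norm ?_ ?_
    · intro N
      refine AEStronglyMeasurable.mul ?_ hW.1
      refine Continuous.aestronglyMeasurable ?_
      refine Continuous.mul continuous_const ?_
      refine continuous_finset_sum _ fun n _ => ?_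
      exact (map_continuous (fourier (-n))).comp (continuous_fst.sub continuous_snd)
    · intro N
      filter_upwards with p
      rw [norm_mul]
      calc ‖(((2 * (N : ℝ) + 1 : ℝ) : ℂ))⁻¹ *
            ∑ n ∈ Finset.Icc (-(N : ℤ)) (N : ℤ), fourier (-n) (p.1 - p.2)‖ * ‖W p‖
          ≤ 1 * ‖W p‖ :=
            mul_le_mul_of_nonneg_right (dir_bound N (p.1 - p.2)) (norm_nonneg _)
        _ = ‖W p‖ := one_mul _
    · filter_upwards with p
      have h := (dir_tendsto (p.1 - p.2)).mul_const (W p)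
      have heq : (Set.diagonal (AddCircle (2 * π))).indicator W p
          = (if p.1 - p.2 = 0 then (1 : ℂ) else 0) * W p := by
        simp only [Set.indicator_apply, Set.mem_diagonal_iff, sub_eq_zero]
        split_ifs with h'
        · rw [one_mul]
        · rw [zero_mul]
      rw [heq]
      exact h
  -- the diagonal integral
  let g : AddCircle (2 * π) → ℂ := fun x => (ν {x}).toReal • (w x * (starRingEnd ℂ) (w x))
  have hmarg : ∀ x : AddCircle (2 * π),
      (∫ y, (Set.diagonal (AddCircle (2 * π))).indicator W (x, y) ∂ν) = g x := by
    intro x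
    have h1 : (fun y => (Set.diagonal (AddCircle (2 * π))).indicator W (x, y))
        = Set.indicator ({x} : Set (AddCircle (2 * π)))
            (fun y => w x * (starRingEnd ℂ) (w y)) := by
      funext y
      simp only [Set.indicator_apply, Set.mem_diagonal_iff, Set.mem_singleton_iff]
      by_cases h : x = y
      · rw [if_pos h, if_pos h.symm]
      · rw [if_neg h, if_neg fun h' => h h'.symm]
    rw [h1, integral_indicator (measurableSet_singleton x),
      integral_singleton (fun y => w x * (starRingEnd ℂ) (w y)) x]
    rfl
  have hI : ∫ p, (Set.diagonal (AddCircle (2 * π))).indicator W p ∂(ν.prod ν) = ∫ x, g x ∂ν := by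
    rw [show (∫ p, (Set.diagonal (AddCircle (2 * π))).indicator W p ∂(ν.prod ν))
        = ∫ x, ∫ y, (Set.diagonal (AddCircle (2 * π))).indicator W (x, y) ∂ν ∂ν from
      integral_prod _ hf0_int]
    exact integral_congr_ae (Eventually.of_forall hmarg)
  have hg_int : Integrable g ν := by
    have h1 := hf0_int.integral_prod_left
    exact h1.congr (Eventually.of_forall hmarg)
  -- the set of atoms
  let S : Set (AddCircle (2 * π)) := {x | ν {x} ≠ 0}
  have hSc : S.Countable := by
    have h1 := Measure.countable_meas_pos_of_disjoint_iUnion (μ := ν)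
      (As := fun x : AddCircle (2 * π) => ({x} : Set (AddCircle (2 * π))))
      (fun x => measurableSet_singleton x)
      (fun i j hij => by
        simp only [Function.onFun]
        exact Set.disjoint_singleton.mpr hij)
    exact h1.mono fun x hx => pos_iff_ne_zero.mpr hx
  have hgS : ∀ x ∉ S, g x = 0 := by
    intro x hx
    simp only [S, Set.mem_setOf_eq, not_not] at hx
    simp only [g, hx, ENNReal.toReal_zero, zero_smul]
  have hint_compl : ∫ x in Sᶜ, g x ∂ν = 0 := by
    rw [setIntegral_congr_fun hSc.measurableSet.compl fun x hx => hgS x hx]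
    exact integral_zero _ _
  have hIS : ∫ x, g x ∂ν = ∫ x in S, g x ∂ν := by
    rw [← integral_add_compl hSc.measurableSet hg_int, hint_compl, add_zero]
  -- the sum over atoms
  have hcnt : Countable S := hSc.to_subtype
  have hsum0 : HasSum (fun i : S => ∫ x in ({(i : AddCircle (2 * π))} : Set (AddCircle (2 * π))), g x ∂ν)
      (∫ x in S, g x ∂ν) := by
    have h1 := hasSum_integral_iUnion (μ := ν)
      (s := fun i : S => ({(i : AddCircle (2 * π))} : Set (AddCircle (2 * π))))
      (fun i => measurableSet_singleton _)
      (fun i j hij => Set.disjoint_singleton.mpr fun h => hij (Subtype.ext h))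
      (by rw [Set.iUnion_of_singleton_coe]; exact hg_int.integrableOn)
    rwa [Set.iUnion_of_singleton_coe] at h1
  have hterm : ∀ x : AddCircle (2 * π),
      (∫ t in ({x} : Set (AddCircle (2 * π))), g t ∂ν) = ((‖a x‖ ^ 2 : ℝ) : ℂ) := by
    intro x
    rw [integral_singleton g x]
    have h1 : a x = ((ν {x}).toReal : ℂ) * w x := by
      rw [ha x, Complex.real_smul]
    have h2 : ((‖a x‖ ^ 2 : ℝ) : ℂ) = a x * (starRingEnd ℂ) (a x) := by
      rw [Complex.mul_conj, Complex.normSq_eq_norm_sq]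
    rw [h2, h1, map_mul, Complex.conj_ofReal]
    simp only [g, Complex.real_smul, measureReal_def]
    ring
  have hsum1 : HasSum (fun x : AddCircle (2 * π) => ‖a x‖ ^ 2) (∫ x in S, g x ∂ν).re := by
    have h1 : (fun i : S => ∫ x in ({(i : AddCircle (2 * π))} : Set (AddCircle (2 * π))), g x ∂ν)
        = fun i : S => ((‖a (i : AddCircle (2 * π))‖ ^ 2 : ℝ) : ℂ) :=
      funext fun i => hterm i
    rw [h1] at hsum0
    have hsupp : Function.support (fun x : AddCircle (2 * π) => ((‖a x‖ ^ 2 : ℝ) : ℂ)) ⊆ S := by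
      intro x hx
      by_contra hxS
      simp only [S, Set.mem_setOf_eq, not_not] at hxS
      apply hx
      simp [ha x, hxS]
    have hsum2 : HasSum (fun x : AddCircle (2 * π) => ((‖a x‖ ^ 2 : ℝ) : ℂ))
        (∫ x in S, g x ∂ν) := (hasSum_subtype_iff_of_support_subset hsupp).mp hsum0
    have h3 := hsum2.mapL Complex.reCLM
    simpa [← Complex.ofReal_pow] using h3
  have hIre : (∫ x in S, g x ∂ν) = (((∫ x in S, g x ∂ν).re : ℝ) : ℂ) := by
    have hsum2 : HasSum (fun x : AddCircle (2 * π) => ((‖a x‖ ^ 2 : ℝ) : ℂ))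
        (∫ x in S, g x ∂ν) := by
      have h1 : (fun i : S => ∫ x in ({(i : AddCircle (2 * π))} : Set (AddCircle (2 * π))), g x ∂ν)
          = fun i : S => ((‖a (i : AddCircle (2 * π))‖ ^ 2 : ℝ) : ℂ) :=
        funext fun i => hterm i
      rw [h1] at hsum0
      refine (hasSum_subtype_iff_of_support_subset ?_).mp hsum0
      intro x hx
      by_contra hxS
      simp only [S, Set.mem_setOf_eq, not_not] at hxS
      apply hx
      simp [ha x, hxS]
    have hsum3 := hsum1.mapL Complex.ofRealCLM
    exact hsum2.unique (by simpa using hsum3)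
  -- assemble part 1
  have hL : Tendsto G atTop (nhds ((∫ x in S, g x ∂ν))) := by
    rwa [hI, hIS] at hG_tendsto
  have part1 : Tendsto
      (fun N : ℕ => (1 / (2 * (N : ℝ) + 1)) *
        ∑ n ∈ Finset.Icc (-(N : ℤ)) (N : ℤ), ‖∫ x, (fourier (-n)) x * w x ∂ν‖ ^ 2)
      atTop
      (nhds (∑' x : AddCircle (2 * π), ‖∫ t in ({x} : Set (AddCircle (2 * π))), w t ∂ν‖ ^ 2)) := by
    have h1 : (fun N : ℕ => (1 / (2 * (N : ℝ) + 1)) *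
        ∑ n ∈ Finset.Icc (-(N : ℤ)) (N : ℤ), ‖∫ x, (fourier (-n)) x * w x ∂ν‖ ^ 2)
        = fun N => (G N).re := funext hR
    rw [h1]
    rw [show (∑' x : AddCircle (2 * π), ‖∫ t in ({x} : Set (AddCircle (2 * π))), w t ∂ν‖ ^ 2)
        = (∫ x in S, g x ∂ν).re from hsum1.tsum_eq]
    exact (Complex.continuous_re.tendsto _).comp hL
  refine ⟨part1, ?_, ?_⟩
  · intro hzero
    have h0 : (∑' x : AddCircle (2 * π), ‖∫ t in ({x} : Set (AddCircle (2 * π))), w t ∂ν‖ ^ 2)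
        = 0 := by
      have hz : ∀ x : AddCircle (2 * π),
          ‖∫ t in ({x} : Set (AddCircle (2 * π))), w t ∂ν‖ ^ 2 = 0 := by
        intro x
        rw [hzero x, norm_zero]
        exact zero_pow two_ne_zero
      rw [tsum_congr hz, tsum_zero]
    rwa [h0] at part1
  · intro htend
    have h0 : (∑' x : AddCircle (2 * π), ‖∫ t in ({x} : Set (AddCircle (2 * π))), w t ∂ν‖ ^ 2)
        = 0 := tendsto_nhds_unique part1 htend
    intro x
    have hle : ‖a x‖ ^ 2 ≤ 0 := by
      rw [← h0]
      exact Summable.le_tsum hsum1.summable x fun y _ => sq_nonneg _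
    have h1 : ‖a x‖ ^ 2 = 0 := le_antisymm hle (sq_nonneg _)
    have h2 : ‖a x‖ = 0 := by
      have := pow_eq_zero_iff (n := 2) (by norm_num) |>.mp h1
      exact this
    exact norm_eq_zero.mp h2
end

section
/- There exists a continuous function f on T whose Fourier series diverges at a point: the symmetric partial sums S_n(f)(0) = Σ_{k=−n}^{n} a_k(f) do not converge as n → ∞. -/
open MeasureTheory Filter Real AddCircle

open scoped ComplexConjugate
open intervalIntegral

noncomputable section DirichletDivergence




/-- Real Dirichlet kernel on `ℝ`. -/
def dKer (n : ℕ) (x : ℝ) : ℝ := ∑ k ∈ Finset.Icc (-(n : ℤ)) (n : ℤ), Real.cos (k * x)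

/-- Complex Dirichlet kernel on the circle, as a continuous map. -/
def DKer (n : ℕ) : C(AddCircle (2 * π), ℂ) :=
  ∑ k ∈ Finset.Icc (-(n : ℤ)) (n : ℤ), fourier k

lemma fourier_eq (k : ℤ) (x : ℝ) :
    fourier k (x : AddCircle (2 * π)) = Complex.exp ((k * x : ℝ) * Complex.I) := by
  rw [fourier_coe_apply]
  congr 1
  have : (2 * π : ℂ) ≠ 0 := by
    simpa using Complex.ofReal_ne_zero.mpr (ne_of_gt Real.two_pi_pos)
  push_cast
  field_simp

lemma sum_neg_Icc {M : Type*} [AddCommMonoid M] (n : ℕ) (f : ℤ → M) :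
    ∑ k ∈ Finset.Icc (-(n : ℤ)) (n : ℤ), f (-k) = ∑ k ∈ Finset.Icc (-(n : ℤ)) (n : ℤ), f k := by
  refine Finset.sum_nbij' (fun k => -k) (fun k => -k) ?_ ?_ ?_ ?_ ?_ <;>
    simp +contextual [Finset.mem_Icc] <;> omega

lemma DKer_coe (n : ℕ) (x : ℝ) :
    DKer n (x : AddCircle (2 * π)) = ((dKer n x : ℝ) : ℂ) := by
  have h : DKer n (x : AddCircle (2 * π))
      = ∑ k ∈ Finset.Icc (-(n : ℤ)) (n : ℤ), Complex.exp ((k * x : ℝ) * Complex.I) := by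
    simp only [DKer, ContinuousMap.coe_sum, Finset.sum_apply]
    exact Finset.sum_congr rfl fun k _ => fourier_eq k x
  rw [h]
  have : ∀ k : ℤ, Complex.exp ((k * x : ℝ) * Complex.I)
      = Complex.cos (k * x : ℝ) + Complex.sin (k * x : ℝ) * Complex.I := by
    intro k; rw [Complex.exp_mul_I]
  simp_rw [this, Finset.sum_add_distrib, ← Finset.sum_mul]
  have hsin : ∑ k ∈ Finset.Icc (-(n : ℤ)) (n : ℤ), Complex.sin ((k * x : ℝ)) = 0 := by
    have := sum_neg_Icc n (fun k : ℤ => Complex.sin ((k * x : ℝ)))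
    have h2 : ∀ k : ℤ, Complex.sin ((((-k) : ℤ) * x : ℝ)) = - Complex.sin ((k * x : ℝ)) := by
      intro k; push_cast; rw [neg_mul, Complex.sin_neg]
    simp_rw [h2] at this
    rw [Finset.sum_neg_distrib] at this
    linear_combination (-1/2 : ℂ) * this
  rw [hsin, zero_mul, add_zero, dKer]
  push_cast
  exact Finset.sum_congr rfl fun k _ => by push_cast; ring



lemma Icc_succ (n : ℕ) :
    Finset.Icc (-(n+1 : ℤ)) (n+1 : ℤ)
      = insert (-(n+1 : ℤ)) (insert ((n+1 : ℤ)) (Finset.Icc (-(n : ℤ)) (n : ℤ))) := by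
  ext k; simp [Finset.mem_Icc]; omega

lemma dKer_succ (n : ℕ) (x : ℝ) :
    dKer (n+1) x = dKer n x + 2 * Real.cos ((n+1) * x) := by
  have h1 : (-(n+1 : ℤ)) ∉ insert ((n+1 : ℤ)) (Finset.Icc (-(n : ℤ)) (n : ℤ)) := by
    simp [Finset.mem_Icc]; omega
  have h2 : ((n+1 : ℤ)) ∉ Finset.Icc (-(n : ℤ)) (n : ℤ) := by simp [Finset.mem_Icc]
  rw [dKer, show (((n:ℕ)+1 : ℕ) : ℤ) = (n : ℤ) + 1 by push_cast; ring, Icc_succ,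
    Finset.sum_insert h1, Finset.sum_insert h2]
  have : ((-(↑n + 1) : ℤ) : ℝ) * x = -(((n:ℝ)+1) * x) := by push_cast; ring
  rw [this, Real.cos_neg]
  rw [dKer]
  push_cast
  ring

lemma sin_half_mul_dKer (n : ℕ) (x : ℝ) :
    Real.sin (x/2) * dKer n x = Real.sin ((2*n+1) * (x/2)) := by
  induction n with
  | zero => simp [dKer]
  | succ n ih =>
      rw [dKer_succ, mul_add, ih]
      have h1 : ((2*(n+1 : ℕ)+1) : ℝ) * (x/2) = (2*(n:ℝ)+2) * (x/2) + x/2 := by push_cast; ring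
      have h2 : ((2*(n : ℕ)+1) : ℝ) * (x/2) = (2*(n:ℝ)+2) * (x/2) - x/2 := by push_cast; ring
      have h3 : ((n:ℝ)+1) * x = (2*(n:ℝ)+2) * (x/2) := by ring
      rw [h1, h2, h3, Real.sin_add, Real.sin_sub]
      ring


lemma dKer_continuous (n : ℕ) : Continuous (dKer n) :=
  continuous_finset_sum _ fun k _ => Real.continuous_cos.comp (continuous_const.mul continuous_id)

/-- `sin t ≥ √2/2` on `[π/4, 3π/4]`. -/
lemma sin_ge_sqrt2_div_two {t : ℝ} (h1 : π/4 ≤ t) (h2 : t ≤ 3*π/4) :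
    Real.sqrt 2 / 2 ≤ Real.sin t := by
  have h : Real.sin t = Real.cos (t - π/2) := by
    rw [show t - π/2 = -(π/2 - t) by ring, Real.cos_neg, Real.cos_pi_div_two_sub]
  rw [h, ← Real.cos_abs]
  have habs : |t - π/2| ≤ π/4 := by
    rw [abs_le]; constructor <;> linarith
  have := Real.cos_le_cos_of_nonneg_of_le_pi (abs_nonneg (t - π/2))
    (by linarith [pi_pos] : (π/4 : ℝ) ≤ π) habs
  calc Real.sqrt 2 / 2 = Real.cos (π/4) := (Real.cos_pi_div_four).symm
    _ ≤ Real.cos |t - π/2| := this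

lemma dKer_lower (n k : ℕ) (hk : k < n) {x : ℝ}
    (hx1 : (4*k+1)*π/(2*(2*n+1)) ≤ x) (hx2 : x ≤ (4*k+3)*π/(2*(2*n+1))) :
    Real.sqrt 2 / 2 / ((k+1)*π/(2*n+1)) ≤ |dKer n x| := by
  have hπ := pi_pos
  set m : ℝ := 2*n+1 with hm
  have hm0 : (0:ℝ) < m := by positivity
  have hkn : (k:ℝ) + 1 ≤ n := by exact_mod_cast Nat.succ_le_of_lt hk
  have hx0 : 0 < x := lt_of_lt_of_le (by positivity) hx1
  have hxπ : x < π := by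
    have : (4*(k:ℝ)+3) * π / (2*m) < π := by
      rw [div_lt_iff₀ (by positivity)]
      nlinarith
    linarith
  have hs : 0 < Real.sin (x/2) :=
    Real.sin_pos_of_pos_of_lt_pi (by linarith) (by linarith)
  -- |dKer n x| = |sin (m * (x/2))| / sin (x/2)
  have hid : |dKer n x| = |Real.sin (m * (x/2))| / Real.sin (x/2) := by
    have := sin_half_mul_dKer n x
    rw [eq_div_iff (ne_of_gt hs)]
    rw [show m * (x/2) = (2*(n:ℝ)+1) * (x/2) from rfl, ← this, abs_mul,
      abs_of_pos hs, mul_comm]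
  rw [hid]
  -- numerator bound
  have hu1 : (k:ℝ)*π + π/4 ≤ m * (x/2) := by
    have : m * ((4*(k:ℝ)+1)*π/(2*m) / 2) = (k:ℝ)*π + π/4 := by field_simp; ring
    nlinarith
  have hu2 : m * (x/2) ≤ (k:ℝ)*π + 3*π/4 := by
    have : m * ((4*(k:ℝ)+3)*π/(2*m) / 2) = (k:ℝ)*π + 3*π/4 := by field_simp; ring
    nlinarith
  have hnum : Real.sqrt 2 / 2 ≤ |Real.sin (m * (x/2))| := by
    have hper : (-1:ℝ)^(k:ℕ) * Real.sin (m * (x/2) - k*π) = Real.sin (m * (x/2)) := by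
      have h := Real.sin_add_nat_mul_pi (m * (x/2) - k*π) k
      rw [sub_add_cancel] at h
      exact h.symm
    have : |Real.sin (m * (x/2))| = |Real.sin (m * (x/2) - k*π)| := by
      rw [← hper, abs_mul, abs_pow, abs_neg, abs_one, one_pow, one_mul]
    rw [this]
    have := sin_ge_sqrt2_div_two (t := m * (x/2) - k*π) (by linarith) (by linarith)
    exact le_trans this (le_abs_self _)
  -- denominator bound
  have hden : Real.sin (x/2) ≤ ((k:ℝ)+1)*π/m := by
    have h1 : Real.sin (x/2) ≤ x/2 := Real.sin_le (by linarith)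
    have h2 : x/2 ≤ ((k:ℝ)+1)*π/m := by
      rw [le_div_iff₀ hm0]
      have : x ≤ (4*(k:ℝ)+3)*π/(2*m) := hx2
      rw [le_div_iff₀ (by positivity)] at this
      nlinarith
    linarith
  exact div_le_div₀ (abs_nonneg _) hnum hs hden

/-- Main divergence estimate. -/
lemma key_est (n : ℕ) :
    ∑ j ∈ Finset.range n, Real.sqrt 2 / 2 * (1/(j+1)) ≤ ∫ x in (0:ℝ)..(2*π), |dKer n x| := by
  have hπ := pi_pos
  set m : ℝ := 2*n+1 with hm
  have hm0 : (0:ℝ) < m := by positivity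
  have hint : ∀ a b : ℝ, IntervalIntegrable (fun x => |dKer n x|) volume a b :=
    fun a b => ((dKer_continuous n).abs).intervalIntegrable a b
  have hnonneg : ∀ a b : ℝ, a ≤ b → 0 ≤ ∫ x in a..b, |dKer n x| := fun a b hab =>
    intervalIntegral.integral_nonneg hab (fun x _ => abs_nonneg _)
  have main : ∀ k : ℕ, k ≤ n →
      ∑ j ∈ Finset.range k, Real.sqrt 2 / 2 * (1/(j+1))
        ≤ ∫ x in (0:ℝ)..(2*k*π/m), |dKer n x| := by
    intro k hkn
    induction k with
    | zero => simp
    | succ k ih =>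
        have hk : k < n := Nat.lt_of_succ_le hkn
        have ih' := ih (le_of_lt hk)
        set c : ℝ := (4*k+1)*π/(2*m) with hc
        set d : ℝ := (4*k+3)*π/(2*m) with hd
        have hec : 2*(k:ℝ)*π/m ≤ c := by
          rw [hc]; rw [div_le_div_iff₀ (by positivity) (by positivity)]; nlinarith
        have hcd : c ≤ d := by
          rw [hc, hd]; gcongr; nlinarith
        have hde : d ≤ 2*((k:ℝ)+1)*π/m := by
          rw [hd]; rw [div_le_div_iff₀ (by positivity) (by positivity)]; nlinarith
        have split1 : ∫ x in (0:ℝ)..(2*((k:ℝ)+1)*π/m), |dKer n x|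
            = (∫ x in (0:ℝ)..(2*(k:ℝ)*π/m), |dKer n x|)
              + (∫ x in (2*(k:ℝ)*π/m)..c, |dKer n x|)
              + (∫ x in c..d, |dKer n x|)
              + (∫ x in d..(2*((k:ℝ)+1)*π/m), |dKer n x|) := by
          rw [integral_add_adjacent_intervals (hint _ _) (hint _ _),
            integral_add_adjacent_intervals (hint _ _) (hint _ _),
            integral_add_adjacent_intervals (hint _ _) (hint _ _)]
        have hmid : Real.sqrt 2 / 2 * (1/((k:ℝ)+1)) ≤ ∫ x in c..d, |dKer n x| := by
          have hconst : ∫ x in c..d, (Real.sqrt 2 / 2 / (((k:ℝ)+1)*π/m)) =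
              (d - c) * (Real.sqrt 2 / 2 / (((k:ℝ)+1)*π/m)) := by
            simp only [intervalIntegral.integral_const, smul_eq_mul]
          have hmono : ∫ x in c..d, (Real.sqrt 2 / 2 / (((k:ℝ)+1)*π/m))
              ≤ ∫ x in c..d, |dKer n x| := by
            refine intervalIntegral.integral_mono_on hcd
              (intervalIntegrable_const) (hint _ _) ?_
            intro x hx
            exact dKer_lower n k hk hx.1 hx.2
          have hval : (d - c) * (Real.sqrt 2 / 2 / (((k:ℝ)+1)*π/m))
              = Real.sqrt 2 / 2 * (1/((k:ℝ)+1)) := by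
            rw [hd, hc]
            field_simp
            ring
          rw [hconst, hval] at hmono
          exact hmono
        rw [Finset.sum_range_succ]
        have e1 : (0:ℝ) ≤ ∫ x in (2*(k:ℝ)*π/m)..c, |dKer n x| := hnonneg _ _ hec
        have e2 : (0:ℝ) ≤ ∫ x in d..(2*((k:ℝ)+1)*π/m), |dKer n x| := hnonneg _ _ hde
        have : (2*(↑(k+1)):ℝ)*π/m = 2*((k:ℝ)+1)*π/m := by push_cast; ring
        rw [this, split1]
        push_cast
        linarith
  have hmn := main n le_rfl
  have hend : 2*(n:ℝ)*π/m ≤ 2*π := by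
    rw [div_le_iff₀ hm0]; nlinarith
  have : ∫ x in (0:ℝ)..(2*π), |dKer n x|
      = (∫ x in (0:ℝ)..(2*(n:ℝ)*π/m), |dKer n x|) + ∫ x in (2*(n:ℝ)*π/m)..(2*π), |dKer n x| :=
    (integral_add_adjacent_intervals (hint _ _) (hint _ _)).symm
  have e3 := hnonneg _ _ hend
  linarith


lemma cont_integrable (f : C(AddCircle (2 * π), ℂ)) :
    Integrable (⇑f) (haarAddCircle (T := 2 * π)) :=
  f.continuous.integrable_of_hasCompactSupport (HasCompactSupport.of_compactSpace _)

lemma cont_integrable' {f : AddCircle (2 * π) → ℂ} (hf : Continuous f) :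
    Integrable f (haarAddCircle (T := 2 * π)) :=
  hf.integrable_of_hasCompactSupport (HasCompactSupport.of_compactSpace _)

lemma cont_integrableR {f : AddCircle (2 * π) → ℝ} (hf : Continuous f) :
    Integrable f (haarAddCircle (T := 2 * π)) :=
  hf.integrable_of_hasCompactSupport (HasCompactSupport.of_compactSpace _)

lemma norm_fourierCoeff_le (f : C(AddCircle (2 * π), ℂ)) (k : ℤ) :
    ‖fourierCoeff (⇑f) k‖ ≤ ‖f‖ := by
  rw [fourierCoeff]
  calc ‖∫ t : AddCircle (2 * π), fourier (-k) t • f t ∂haarAddCircle‖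
      ≤ ‖f‖ * (haarAddCircle (T := 2 * π) Set.univ).toReal := by
        apply MeasureTheory.norm_integral_le_of_norm_le_const
        filter_upwards with t
        rw [norm_smul]
        have h1 : ‖(fourier (-k) t : ℂ)‖ = 1 := by
          rw [fourier_apply, Circle.norm_coe]
        rw [h1, one_mul]
        exact f.norm_coe_le_norm t
    _ = ‖f‖ := by simp
/-- The partial-sum functional as a continuous linear map. -/
def phi (n : ℕ) : C(AddCircle (2 * π), ℂ) →L[ℂ] ℂ :=
  LinearMap.mkContinuous
    { toFun := fun f => ∑ k ∈ Finset.Icc (-(n : ℤ)) (n : ℤ), fourierCoeff (⇑f) k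
      map_add' := by
        intro f g
        rw [← Finset.sum_add_distrib]
        refine Finset.sum_congr rfl fun k _ => ?_
        simp only [fourierCoeff, ContinuousMap.coe_add, Pi.add_apply, smul_add]
        exact integral_add ((cont_integrable' ((fourier (-k)).continuous.smul f.continuous)))
          ((cont_integrable' ((fourier (-k)).continuous.smul g.continuous)))
      map_smul' := by
        intro c f
        simp only [RingHom.id_apply]
        rw [Finset.smul_sum]
        refine Finset.sum_congr rfl fun k _ => ?_
        have : ⇑(c • f) = c • ⇑f := rfl
        rw [this, fourierCoeff.const_smul] }
    ((Finset.Icc (-(n : ℤ)) (n : ℤ)).card)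
    (by
      intro f
      simp only [LinearMap.coe_mk, AddHom.coe_mk]
      calc ‖∑ k ∈ Finset.Icc (-(n : ℤ)) (n : ℤ), fourierCoeff (⇑f) k‖
          ≤ ∑ k ∈ Finset.Icc (-(n : ℤ)) (n : ℤ), ‖fourierCoeff (⇑f) k‖ := norm_sum_le _ _
        _ ≤ ∑ k ∈ Finset.Icc (-(n : ℤ)) (n : ℤ), ‖f‖ :=
            Finset.sum_le_sum fun k _ => norm_fourierCoeff_le f k
        _ = ((Finset.Icc (-(n : ℤ)) (n : ℤ)).card) * ‖f‖ := by
            rw [Finset.sum_const, nsmul_eq_mul])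

lemma phi_apply (n : ℕ) (f : C(AddCircle (2 * π), ℂ)) :
    phi n f = ∑ k ∈ Finset.Icc (-(n : ℤ)) (n : ℤ), fourierCoeff (⇑f) k := rfl

/-- Integral representation of `phi`. -/
lemma phi_eq_integral (n : ℕ) (f : C(AddCircle (2 * π), ℂ)) :
    phi n f = ∫ t, DKer n t * f t ∂haarAddCircle := by
  rw [phi_apply]
  simp only [fourierCoeff]
  rw [← MeasureTheory.integral_finset_sum]
  · congr 1
    ext t
    rw [← Finset.sum_smul]
    have : ∑ k ∈ Finset.Icc (-(n : ℤ)) (n : ℤ), (fourier (-k) t : ℂ) = DKer n t := by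
      rw [DKer]
      have := sum_neg_Icc n (fun k => (fourier k t : ℂ))
      simp only [ContinuousMap.coe_sum, Finset.sum_apply]
      exact this
    rw [this, smul_eq_mul]
  · exact fun k _ => cont_integrable' ((fourier (-k)).continuous.smul f.continuous)

/-- `DKer n t` is real. -/
lemma DKer_re (n : ℕ) (t : AddCircle (2 * π)) : (((DKer n t).re : ℝ) : ℂ) = DKer n t := by
  rw [Complex.conj_eq_iff_re.mp]
  have : conj (DKer n t) = DKer n t := by
    rw [DKer]
    simp only [ContinuousMap.coe_sum, Finset.sum_apply, map_sum]
    rw [← sum_neg_Icc n (fun k => (fourier k t : ℂ))]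
    exact Finset.sum_congr rfl fun k _ => (fourier_neg (n := k) (x := t)).symm
  exact this


/-- The test function `D_n / (|D_n| + 1)`. -/
def gTest (n : ℕ) : C(AddCircle (2 * π), ℂ) where
  toFun t := (((DKer n t).re / (|(DKer n t).re| + 1) : ℝ) : ℂ)
  continuous_toFun := by
    apply Complex.continuous_ofReal.comp
    apply Continuous.div
    · exact Complex.continuous_re.comp (DKer n).continuous
    · exact ((Complex.continuous_re.comp (DKer n).continuous).abs).add continuous_const
    · intro t; positivity

lemma gTest_norm_le (n : ℕ) : ‖gTest n‖ ≤ 1 := by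
  refine ContinuousMap.norm_le _ zero_le_one |>.mpr fun t => ?_
  show ‖(((DKer n t).re / (|(DKer n t).re| + 1) : ℝ) : ℂ)‖ ≤ 1
  rw [Complex.norm_real, Real.norm_eq_abs, abs_div, abs_of_pos (by positivity : (0:ℝ) < |(DKer n t).re| + 1)]
  rw [div_le_one (by positivity)]
  linarith [abs_nonneg (DKer n t).re]

lemma reDKer_continuous (n : ℕ) : Continuous fun t => (DKer n t).re :=
  Complex.continuous_re.comp (DKer n).continuous

/-- Key lower bound on the functional applied to the test function. -/
lemma lower_bound (n : ℕ) :
    (∫ t, |(DKer n t).re| ∂haarAddCircle) - 1 ≤ ‖phi n (gTest n)‖ := by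
  set r : AddCircle (2 * π) → ℝ := fun t => (DKer n t).re with hr
  have hrc : Continuous r := reDKer_continuous n
  have hgc : Continuous fun t => r t / (|r t| + 1) :=
    hrc.div ((hrc.abs).add continuous_const) (fun t => by positivity)
  have h1 : phi n (gTest n) = ((∫ t, r t * (r t / (|r t| + 1)) ∂haarAddCircle : ℝ) : ℂ) := by
    rw [phi_eq_integral]
    rw [show ((∫ t, r t * (r t / (|r t| + 1)) ∂haarAddCircle : ℝ) : ℂ)
        = ∫ t, ((r t * (r t / (|r t| + 1)) : ℝ) : ℂ) ∂haarAddCircle from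
      (integral_ofReal (𝕜 := ℂ)).symm]
    refine integral_congr_ae (Filter.Eventually.of_forall fun t => ?_)
    show DKer n t * (gTest n) t = _
    have : (gTest n) t = ((r t / (|r t| + 1) : ℝ) : ℂ) := rfl
    rw [this, ← DKer_re n t]
    push_cast
    ring
  have h2 : (∫ t, |r t| ∂haarAddCircle) - 1 ≤ ∫ t, r t * (r t / (|r t| + 1)) ∂haarAddCircle := by
    have hle : ∀ t, |r t| - 1 ≤ r t * (r t / (|r t| + 1)) := by
      intro t
      have hpos : (0:ℝ) < |r t| + 1 := by positivity
      rw [mul_div_assoc']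
      rw [le_div_iff₀ hpos]
      nlinarith [sq_abs (r t), sq_nonneg (r t)]
    calc (∫ t, |r t| ∂haarAddCircle) - 1
        = ∫ t, (|r t| - 1) ∂haarAddCircle := by
          rw [integral_sub (cont_integrableR hrc.abs) (integrable_const _)]
          simp
      _ ≤ _ := integral_mono (by
            exact (cont_integrableR hrc.abs).sub (integrable_const _))
          (cont_integrableR (hrc.mul hgc)) hle
  calc (∫ t, |r t| ∂haarAddCircle) - 1
      ≤ ∫ t, r t * (r t / (|r t| + 1)) ∂haarAddCircle := h2
    _ ≤ ‖phi n (gTest n)‖ := by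
        rw [h1, Complex.norm_real]
        exact le_abs_self _

/-- Transfer of the haar integral to the interval integral. -/
lemma haar_integral_eq (n : ℕ) :
    ∫ t, |(DKer n t).re| ∂haarAddCircle = (1/(2*π)) * ∫ x in (0:ℝ)..(2*π), |dKer n x| := by
  have h := AddCircle.intervalIntegral_preimage (2*π) 0 (fun t => |(DKer n t).re|)
  rw [zero_add] at h
  have hvol : ∫ t, |(DKer n t).re| ∂(volume : Measure (AddCircle (2*π)))
      = (2*π) * ∫ t, |(DKer n t).re| ∂haarAddCircle := by
    rw [AddCircle.volume_eq_smul_haarAddCircle, MeasureTheory.integral_smul_measure,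
      ENNReal.toReal_ofReal Real.two_pi_pos.le, smul_eq_mul]
  have hco : ∀ x : ℝ, |(DKer n (x : AddCircle (2*π))).re| = |dKer n x| := by
    intro x
    rw [DKer_coe]
    simp
  rw [← h] at hvol
  have : ∫ x in (0:ℝ)..(2*π), |(DKer n (x : AddCircle (2*π))).re|
      = ∫ x in (0:ℝ)..(2*π), |dKer n x| := by
    refine intervalIntegral.integral_congr fun x _ => hco x
  rw [this] at hvol
  field_simp [Real.pi_ne_zero] at hvol ⊢
  linarith


/-- There is a continuous function on the circle `T = ℝ/2πℤ` whose Fourier series diverges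
at a point: the symmetric partial sums `S_n(f)(0) = ∑_{k=-n}^{n} a_k(f)` do not converge. -/
theorem exists_continuous_divergent_fourierSeries :
    ∃ f : C(AddCircle (2 * π), ℂ),
      ¬ ∃ L : ℂ, Tendsto
        (fun n : ℕ => ∑ k ∈ Finset.Icc (-(n : ℤ)) (n : ℤ), fourierCoeff (⇑f) k)
        atTop (nhds L) := by
  by_contra h
  push_neg at h
  -- pointwise boundedness
  have hb : ∀ f : C(AddCircle (2 * π), ℂ), ∃ C, ∀ n, ‖phi n f‖ ≤ C := by
    intro f
    obtain ⟨L, hL⟩ := h f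
    have hL' : Tendsto (fun n : ℕ => phi n f) atTop (nhds L) := by
      simpa only [phi_apply] using hL
    obtain ⟨R, -, hR⟩ := cauchySeq_bdd hL'.cauchySeq
    exact ⟨‖phi 0 f‖ + R, fun n => by
      have := hR n 0
      rw [dist_eq_norm] at this
      calc ‖phi n f‖ = ‖(phi n f - phi 0 f) + phi 0 f‖ := by ring_nf
        _ ≤ ‖phi n f - phi 0 f‖ + ‖phi 0 f‖ := norm_add_le _ _
        _ ≤ ‖phi 0 f‖ + R := by linarith [this.le]⟩
  obtain ⟨C, hC⟩ := banach_steinhaus hb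
  have hC0 : 0 ≤ C := le_trans (norm_nonneg _) (hC 0)
  -- uniform bound on the L¹ norms
  have hbound : ∀ n : ℕ,
      (1/(2*π)) * ∑ j ∈ Finset.range n, Real.sqrt 2 / 2 * (1/(j+1)) ≤ C + 1 := by
    intro n
    have h1 : ‖phi n (gTest n)‖ ≤ C := by
      calc ‖phi n (gTest n)‖ ≤ ‖phi n‖ * ‖gTest n‖ := (phi n).le_opNorm _
        _ ≤ C * 1 := mul_le_mul (hC n) (gTest_norm_le n) (norm_nonneg _) hC0
        _ = C := mul_one C
    have h2 := lower_bound n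
    have h3 := haar_integral_eq n
    have h4 := key_est n
    have h5 : (1/(2*π)) * ∑ j ∈ Finset.range n, Real.sqrt 2 / 2 * (1/(j+1))
        ≤ ∫ t, |(DKer n t).re| ∂haarAddCircle := by
      rw [h3]
      have : (0:ℝ) < 1/(2*π) := by positivity
      exact mul_le_mul_of_nonneg_left h4 this.le
    linarith
  -- but the harmonic sums diverge
  have hdiv : Tendsto (fun n : ℕ =>
      (1/(2*π)) * ∑ j ∈ Finset.range n, Real.sqrt 2 / 2 * (1/(j+1))) atTop atTop := by
    have h0 : Tendsto (fun n : ℕ => ∑ j ∈ Finset.range n, (1:ℝ)/(j+1)) atTop atTop := by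
      have := Real.tendsto_sum_range_one_div_nat_succ_atTop
      simpa using this
    have heq : ∀ n : ℕ, (1/(2*π)) * ∑ j ∈ Finset.range n, Real.sqrt 2 / 2 * (1/(j+1))
        = (1/(2*π) * (Real.sqrt 2 / 2)) * ∑ j ∈ Finset.range n, (1:ℝ)/(j+1) := by
      intro n
      rw [← Finset.mul_sum, mul_assoc]
    simp_rw [heq]
    exact h0.const_mul_atTop (by positivity)
  obtain ⟨n, hn⟩ := (hdiv.eventually_gt_atTop (C + 1)).exists
  exact absurd (hbound n) (not_le.mpr hn)

end DirichletDivergence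
end

section
/- Pointwise Fejér summability: let f ∈ L¹(T), let x be a point of T and L a complex number such that (1/t) ∫_0^t |f(x+u) + f(x−u) − 2L| du → 0 as t → 0⁺. Then (K_n * f)(x) → L as n → ∞. -/
set_option maxHeartbeats 1000000

open MeasureTheory Filter Real Set

/-- The Fejér kernel `K_n(x) = ∑_{k=-n}^{n} (1 - |k|/n) e^{ikx}`. -/
noncomputable def fejerKernel (n : ℕ) (x : ℝ) : ℂ :=
  ∑ k ∈ Finset.Icc (-(n : ℤ)) (n : ℤ),
    ((1 - |(k : ℝ)| / (n : ℝ) : ℝ) : ℂ) * Complex.exp (Complex.I * (k : ℂ) * (x : ℂ))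

namespace FejerAux

noncomputable def Dn (n : ℕ) (t : ℝ) : ℂ :=
  ∑ k ∈ Finset.range n, Complex.exp (Complex.I * (k : ℂ) * (t : ℂ))

lemma exp_I_int (t : ℝ) (k : ℤ) :
    Complex.exp (Complex.I * (k : ℂ) * (t : ℂ)) = Complex.exp (Complex.I * t) ^ k := by
  rw [← Complex.exp_int_mul]; congr 1; ring

lemma exp_I_nat (t : ℝ) (k : ℕ) :
    Complex.exp (Complex.I * (k : ℂ) * (t : ℂ)) = Complex.exp (Complex.I * t) ^ k := by
  rw [← Complex.exp_nat_mul]; congr 1; ring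

lemma sum_T_reindex (u : ℂ) (n : ℕ) :
    ∑ k ∈ Finset.Icc (-(n:ℤ)) (n:ℤ), u ^ k
      = ∑ j ∈ Finset.range (2*n+1), u ^ ((j:ℤ) - n) := by
  refine Finset.sum_nbij' (fun k => (k + n).toNat) (fun j => (j : ℤ) - n) ?_ ?_ ?_ ?_ ?_
  · intro a ha; simp only [Finset.mem_Icc] at ha; simp only [Finset.mem_range]; beta_reduce; omega
  · intro a ha; simp only [Finset.mem_range] at ha; simp only [Finset.mem_Icc]; beta_reduce; omega
  · intro a ha; simp only [Finset.mem_Icc] at ha; beta_reduce; omega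
  · intro a ha; simp only [Finset.mem_range] at ha; beta_reduce; omega
  · intro a ha; simp only [Finset.mem_Icc] at ha
    beta_reduce; congr 1; omega

lemma sum_T_eq (u : ℂ) (hu : u ≠ 0) (n : ℕ) :
    ∑ k ∈ Finset.Icc (-(n:ℤ)) (n:ℤ), u ^ k
      = (∑ k ∈ Finset.range n, u ^ k) * u⁻¹ ^ n
        + (u ^ n * (∑ k ∈ Finset.range n, u⁻¹ ^ k) + 1) := by
  rw [sum_T_reindex, show 2*n+1 = n + (n+1) by ring, Finset.sum_range_add]
  congr 1
  · rw [Finset.sum_mul]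
    refine Finset.sum_congr rfl fun j hj => ?_
    rw [zpow_sub₀ hu, zpow_natCast, zpow_natCast, div_eq_mul_inv, ← inv_pow]
  · have h1 : ∀ i : ℕ, u ^ ((↑(n+i) : ℤ) - n) = u ^ i := by
      intro i
      rw [show ((↑(n+i):ℤ) - n) = (i:ℤ) by push_cast; ring, zpow_natCast]
    rw [Finset.sum_congr rfl fun i _ => h1 i]
    have h2 : u ^ n * (∑ k ∈ Finset.range n, u⁻¹ ^ k) = ∑ k ∈ Finset.range n, u ^ (k+1) := by
      rw [Finset.mul_sum]
      rw [← Finset.sum_range_reflect (fun k => u ^ (k+1)) n]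
      refine Finset.sum_congr rfl fun k hk => ?_
      simp only [Finset.mem_range] at hk
      rw [show n - 1 - k + 1 = n - k by omega, pow_sub₀ u hu hk.le, inv_pow]
    have h3 := Finset.sum_range_succ' (fun i => u ^ i) n
    simp only [pow_zero] at h3
    rw [h2, h3]

lemma key (u : ℂ) (hu : u ≠ 0) (n : ℕ) :
    ∑ k ∈ Finset.Icc (-(n : ℤ)) (n : ℤ), ((n : ℂ) - (k.natAbs : ℂ)) * u ^ k
      = (∑ k ∈ Finset.range n, u ^ k) * (∑ k ∈ Finset.range n, u⁻¹ ^ k) := by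
  induction n with
  | zero => simp
  | succ n ih =>
      have hsub : Finset.Icc (-(n:ℤ)) (n:ℤ) ⊆ Finset.Icc (-(n+1:ℕ):ℤ) ((n+1:ℕ):ℤ) := by
        apply Finset.Icc_subset_Icc <;> push_cast <;> omega
      have hzero : ∀ k ∈ Finset.Icc (-(n+1:ℕ):ℤ) ((n+1:ℕ):ℤ), k ∉ Finset.Icc (-(n:ℤ)) (n:ℤ) →
          (((n+1:ℕ) : ℂ) - (k.natAbs : ℂ)) * u ^ k = 0 := by
        intro k hk hk'
        simp only [Finset.mem_Icc] at hk hk'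
        have : k.natAbs = n + 1 := by omega
        rw [this]; push_cast; ring
      rw [← Finset.sum_subset hsub hzero]
      have hstep : ∀ k ∈ Finset.Icc (-(n:ℤ)) (n:ℤ),
          (((n+1:ℕ) : ℂ) - (k.natAbs : ℂ)) * u ^ k
            = ((n : ℂ) - (k.natAbs : ℂ)) * u ^ k + u ^ k := by
        intro k _; push_cast; ring
      rw [Finset.sum_congr rfl hstep, Finset.sum_add_distrib, ih, sum_T_eq u hu n,
        Finset.sum_range_succ, Finset.sum_range_succ]
      have h4 : u ^ n * u⁻¹ ^ n = 1 := by rw [← mul_pow, mul_inv_cancel₀ hu, one_pow]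
      linear_combination -h4

noncomputable def Kr (n : ℕ) (t : ℝ) : ℝ := Complex.normSq (Dn n t) / n

lemma Dn_eq (n : ℕ) (t : ℝ) :
    Dn n t = ∑ k ∈ Finset.range n, Complex.exp (Complex.I * t) ^ k :=
  Finset.sum_congr rfl fun k _ => exp_I_nat t k

lemma conj_exp (t : ℝ) :
    (starRingEnd ℂ) (Complex.exp (Complex.I * t)) = (Complex.exp (Complex.I * t))⁻¹ := by
  rw [← Complex.exp_conj, ← Complex.exp_neg]
  congr 1
  simp [Complex.conj_ofReal]

lemma conj_Dn (n : ℕ) (t : ℝ) :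
    (starRingEnd ℂ) (Dn n t) = ∑ k ∈ Finset.range n, (Complex.exp (Complex.I * t))⁻¹ ^ k := by
  rw [Dn_eq, map_sum]
  exact Finset.sum_congr rfl fun k _ => by rw [map_pow, conj_exp]

lemma fejer_eq (n : ℕ) (hn : 1 ≤ n) (t : ℝ) : fejerKernel n t = ((Kr n t : ℝ) : ℂ) := by
  have hu : Complex.exp (Complex.I * t) ≠ 0 := Complex.exp_ne_zero _
  have hn' : ((n : ℂ)) ≠ 0 := Nat.cast_ne_zero.mpr (by omega)
  have h1 : fejerKernel n t
      = (1 / (n:ℂ)) * ∑ k ∈ Finset.Icc (-(n : ℤ)) (n : ℤ),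
          ((n : ℂ) - (k.natAbs : ℂ)) * Complex.exp (Complex.I * t) ^ k := by
    rw [Finset.mul_sum]
    refine Finset.sum_congr rfl fun k _ => ?_
    rw [exp_I_int]
    rw [show |(k : ℝ)| = ((k.natAbs : ℕ) : ℝ) by simp [Nat.cast_natAbs, Int.cast_abs]]
    push_cast
    field_simp
  rw [h1, key _ hu, ← Dn_eq, ← conj_Dn, Complex.mul_conj, Kr]
  push_cast
  field_simp

lemma Kr_nonneg (n : ℕ) (t : ℝ) : 0 ≤ Kr n t :=
  div_nonneg (Complex.normSq_nonneg _) (Nat.cast_nonneg n)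

lemma norm_Dn_le (n : ℕ) (t : ℝ) : ‖Dn n t‖ ≤ n := by
  refine (norm_sum_le _ _).trans ?_
  have : ∀ k ∈ Finset.range n, ‖Complex.exp (Complex.I * (k : ℂ) * (t : ℂ))‖ = 1 := by
    intro k _
    rw [Complex.norm_exp]
    norm_num [Complex.mul_re, Complex.mul_im]
  rw [Finset.sum_congr rfl this]
  simp

lemma Kr_le (n : ℕ) (t : ℝ) : Kr n t ≤ n := by
  rcases Nat.eq_zero_or_pos n with h | h
  · simp [Kr, h]
  have hn : (0 : ℝ) < n := by exact_mod_cast h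
  rw [Kr, div_le_iff₀ hn, ← Complex.sq_norm]
  nlinarith [norm_Dn_le n t, norm_nonneg (Dn n t)]

lemma norm_sub_one (t : ℝ) (ht : 0 < t) (ht' : t ≤ π) :
    ‖Complex.exp (Complex.I * t) - 1‖ = 2 * Real.sin (t / 2) := by
  have h1 : Complex.normSq (Complex.exp (Complex.I * t) - 1) = 2 - 2 * Real.cos t := by
    rw [show Complex.I * (t:ℂ) = (t:ℂ) * Complex.I by ring, Complex.exp_mul_I]
    rw [Complex.normSq_apply]
    simp [Complex.cos_ofReal_re, Complex.sin_ofReal_re, Complex.add_re, Complex.add_im,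
      Complex.mul_re, Complex.mul_im, Complex.I_re, Complex.I_im, Complex.one_re, Complex.one_im,
      Complex.cos_ofReal_im, Complex.sin_ofReal_im]
    have := Real.sin_sq_add_cos_sq t
    nlinarith
  have h2 : 2 - 2 * Real.cos t = 4 * Real.sin (t / 2) ^ 2 := by
    have := Real.sin_sq_eq_half_sub (t / 2)
    rw [show 2 * (t/2) = t by ring] at this
    nlinarith
  have h3 : 0 ≤ Real.sin (t / 2) := by
    apply Real.sin_nonneg_of_nonneg_of_le_pi <;> nlinarith [Real.pi_pos]
  rw [Complex.norm_def, h1, h2]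
  rw [show 4 * Real.sin (t/2)^2 = (2 * Real.sin (t/2))^2 by ring]
  exact Real.sqrt_sq (by nlinarith)

lemma sin_half_lb (t : ℝ) (ht : 0 < t) (ht' : t ≤ π) : t / π ≤ Real.sin (t / 2) := by
  have h := Real.mul_le_sin (x := t / 2) (by nlinarith) (by nlinarith)
  calc t / π = 2 / π * (t / 2) := by field_simp
    _ ≤ Real.sin (t / 2) := h

lemma Kr_decay (n : ℕ) (hn : 1 ≤ n) (t : ℝ) (ht : 0 < t) (ht' : t ≤ π) :
    Kr n t ≤ π ^ 2 / (n * t ^ 2) := by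
  have hpi := Real.pi_pos
  have hsin : 0 < Real.sin (t / 2) := lt_of_lt_of_le (by positivity) (sin_half_lb t ht ht')
  have hu1 : Complex.exp (Complex.I * t) ≠ 1 := by
    intro h
    have := norm_sub_one t ht ht'
    rw [h] at this
    simp at this
    nlinarith
  have hDn : ‖Dn n t‖ ≤ π / t := by
    rw [Dn_eq, geom_sum_eq hu1, norm_div]
    rw [norm_sub_one t ht ht']
    have hnum : ‖Complex.exp (Complex.I * t) ^ n - 1‖ ≤ 2 := by
      refine (norm_sub_le _ _).trans ?_
      rw [norm_pow]
      have : ‖Complex.exp (Complex.I * t)‖ = 1 := by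
        rw [Complex.norm_exp]
        norm_num [Complex.mul_re]
      rw [this]; norm_num
    have hlb : 2 * (t / π) ≤ 2 * Real.sin (t / 2) := by
      have := sin_half_lb t ht ht'
      linarith
    calc ‖Complex.exp (Complex.I * t) ^ n - 1‖ / (2 * Real.sin (t/2))
        ≤ 2 / (2 * (t / π)) := div_le_div₀ (by norm_num) hnum (by positivity) hlb
      _ = π / t := by rw [div_eq_div_iff (by positivity) (ne_of_gt ht)]; field_simp
  have hn' : (0:ℝ) < n := by exact_mod_cast hn
  have hb : ‖Dn n t‖ ^ 2 ≤ (π / t) ^ 2 := pow_le_pow_left₀ (norm_nonneg _) hDn 2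
  rw [Kr, ← Complex.sq_norm]
  calc ‖Dn n t‖ ^ 2 / n ≤ (π / t) ^ 2 / n := by gcongr
    _ = π ^ 2 / (n * t ^ 2) := by rw [div_pow]; rw [div_div]; ring_nf

lemma Kr_continuous (n : ℕ) : Continuous (Kr n) := by
  apply Continuous.div_const
  apply Complex.continuous_normSq.comp
  unfold Dn
  apply continuous_finset_sum
  intro k _
  exact Complex.continuous_exp.comp (by continuity)

lemma fejer_even (n : ℕ) (t : ℝ) : fejerKernel n (-t) = fejerKernel n t := by
  unfold fejerKernel
  refine Finset.sum_nbij' (fun k => -k) (fun k => -k) ?_ ?_ ?_ ?_ ?_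
  · intro a ha; simp only [Finset.mem_Icc] at ha ⊢; omega
  · intro a ha; simp only [Finset.mem_Icc] at ha ⊢; omega
  · intro a _; simp
  · intro a _; simp
  · intro a _
    beta_reduce
    push_cast
    rw [abs_neg]
    congr 2
    push_cast
    ring

lemma integral_exp_eq_zero (k : ℤ) (hk : k ≠ 0) :
    (∫ t in (-π)..π, Complex.exp (Complex.I * (k : ℂ) * (t : ℂ))) = 0 := by
  have hc : (Complex.I * (k : ℂ)) ≠ 0 := by
    simp [Complex.I_ne_zero, hk]
  have h1 : ∀ t : ℝ, Complex.exp (Complex.I * (k : ℂ) * (t : ℂ))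
      = Complex.exp ((Complex.I * (k : ℂ)) * (t : ℂ)) := fun t => by ring_nf
  rw [intervalIntegral.integral_congr (fun t _ => h1 t), integral_exp_mul_complex hc]
  have e1 : Complex.I * (k : ℂ) * ((π : ℝ) : ℂ) = (k : ℂ) * ((π : ℝ) * Complex.I) := by ring
  have e2 : Complex.I * (k : ℂ) * (((-π : ℝ)) : ℂ) = ((-k : ℤ) : ℂ) * ((π : ℝ) * Complex.I) := by
    push_cast; ring
  rw [e1, e2, Complex.exp_int_mul, Complex.exp_int_mul, Complex.exp_pi_mul_I]
  have hsq : ((-1 : ℂ)) ^ (-k) = ((-1 : ℂ)) ^ k := by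
    rw [zpow_neg]
    have h2 : ((-1 : ℂ)) ^ k * ((-1 : ℂ)) ^ k = 1 := by
      rw [← zpow_add₀ (by norm_num : (-1:ℂ) ≠ 0), show k + k = 2 * k by ring, zpow_mul]
      norm_num
    exact inv_eq_of_mul_eq_one_right h2
  rw [hsq]
  simp

lemma integral_fejer (n : ℕ) : (∫ t in (-π)..π, fejerKernel n t) = 2 * π := by
  unfold fejerKernel
  rw [intervalIntegral.integral_finset_sum]
  · rw [Finset.sum_eq_single 0]
    · simp only [Int.cast_zero, abs_zero, zero_div, sub_zero, Complex.ofReal_one, one_mul,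
        mul_zero, zero_mul, Complex.exp_zero]
      rw [intervalIntegral.integral_const, sub_neg_eq_add, ← two_mul, Complex.real_smul]
      push_cast
      ring
    · intro k _ hk
      rw [intervalIntegral.integral_const_mul, integral_exp_eq_zero k hk, mul_zero]
    · intro h
      exact absurd (by simp : (0:ℤ) ∈ Finset.Icc (-(n:ℤ)) (n:ℤ)) h
  · intro k _
    apply IntervalIntegrable.const_mul
    apply Continuous.intervalIntegrable
    exact Complex.continuous_exp.comp (by continuity)

variable {f : ℝ → ℂ}

lemma per_shift (hper : Function.Periodic f (2*π)) (h0 : IntervalIntegrable f volume (-π) π)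
    (k : ℤ) : IntervalIntegrable f volume (-π + 2*π*k) (π + 2*π*k) := by
  have h2 := h0.comp_add_right (-(2*π*k))
  have he : (fun x => f (x + -(2*π*k))) = f := by
    funext y
    rw [show y + -(2*π*k) = y - (k : ℝ) * (2*π) by ring]
    exact hper.sub_int_mul_eq k
  rw [he] at h2
  have e1 : -π - -(2*π*(k:ℝ)) = -π + 2*π*k := by ring
  have e2 : π - -(2*π*(k:ℝ)) = π + 2*π*k := by ring
  rwa [e1, e2] at h2

lemma per_II (hper : Function.Periodic f (2*π)) (hf : IntegrableOn f (Ioc (-π) π))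
    (a b : ℝ) : IntervalIntegrable f volume a b := by
  have hpi := Real.pi_pos
  have h0 : IntervalIntegrable f volume (-π) π :=
    (intervalIntegrable_iff_integrableOn_Ioc_of_le (by linarith)).2 hf
  obtain ⟨n, hn⟩ := exists_nat_ge ((|a| + |b|) / (2*π) + 1)
  set A : ℕ → ℝ := fun j => -π + 2*π*((j : ℤ) - n) with hA
  have hpieces : ∀ j < 2*n+1, IntervalIntegrable f volume (A j) (A (j+1)) := by
    intro j _
    have := per_shift hper h0 ((j : ℤ) - n)
    have e1 : A j = -π + 2*π*(((j:ℤ) - n : ℤ) : ℝ) := by simp [hA]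
    have e2 : A (j+1) = π + 2*π*(((j:ℤ) - n : ℤ) : ℝ) := by simp [hA]; push_cast; ring
    rw [e1, e2]
    exact this
  have big := IntervalIntegrable.trans_iterate hpieces
  refine big.mono_set ?_
  have hd : (|a| + |b|) + 2*π ≤ 2*π*n := by
    rw [div_add' _ _ _ (by positivity), div_le_iff₀ (by positivity)] at hn
    linarith [hn]
  have hA0 : A 0 ≤ min a b := by
    simp only [hA, le_min_iff]
    push_cast
    ring_nf
    ring_nf at hd
    constructor <;> nlinarith [neg_abs_le a, neg_abs_le b, abs_nonneg a, abs_nonneg b]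
  have hAe : max a b ≤ A (2*n+1) := by
    simp only [hA, max_le_iff]
    push_cast
    ring_nf
    ring_nf at hd
    constructor <;> nlinarith [le_abs_self a, le_abs_self b, abs_nonneg a, abs_nonneg b]
  rw [Set.uIcc_subset_uIcc_iff_le]
  have hAle : A 0 ≤ A (2*n+1) :=
    le_trans (hA0.trans (min_le_left a b)) ((le_max_left a b).trans hAe)
  rw [min_eq_left hAle, max_eq_right hAle]
  exact ⟨le_trans hA0 (by simp), le_trans (by simp) hAe⟩

lemma core (g : ℝ → ℝ) (hg0 : ∀ t, 0 ≤ g t)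
    (hgI : ∀ a b : ℝ, IntervalIntegrable g volume a b)
    (hx : Tendsto (fun t : ℝ => (1 / t) * ∫ u in (0 : ℝ)..t, g u)
      (nhdsWithin 0 (Ioi 0)) (nhds 0)) :
    Tendsto (fun n : ℕ => ∫ t in (0:ℝ)..π, Kr n t * g t) atTop (nhds 0) := by
  have hpi := Real.pi_pos
  have hKgI : ∀ (n : ℕ) (a b : ℝ), IntervalIntegrable (fun t => Kr n t * g t) volume a b :=
    fun n a b => (hgI a b).continuousOn_mul (Kr_continuous n).continuousOn
  have hGmono : ∀ a b : ℝ, a ≤ b → (∫ u in (0:ℝ)..a, g u) ≤ ∫ u in (0:ℝ)..b, g u := by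
    intro a b hab
    have h1 : (∫ u in (0:ℝ)..b, g u) = (∫ u in (0:ℝ)..a, g u) + ∫ u in a..b, g u :=
      (intervalIntegral.integral_add_adjacent_intervals (hgI 0 a) (hgI a b)).symm
    have h2 : 0 ≤ ∫ u in a..b, g u :=
      intervalIntegral.integral_nonneg hab (fun u _ => hg0 u)
    linarith
  rw [NormedAddCommGroup.tendsto_nhds_zero]
  intro ε hε
  set ε' : ℝ := ε / (3 + 4 * π ^ 2) with hε'def
  have hε' : 0 < ε' := by positivity
  -- get δ
  rw [Metric.tendsto_nhdsWithin_nhds] at hx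
  obtain ⟨δ0, hδ0, hδ0'⟩ := hx ε' hε'
  set δ : ℝ := min (δ0 / 2) π with hδdef
  have hδpos : 0 < δ := lt_min (by linarith) hpi
  have hδπ : δ ≤ π := min_le_right _ _
  have hGδ : ∀ t : ℝ, 0 < t → t ≤ δ → (∫ u in (0:ℝ)..t, g u) ≤ ε' * t := by
    intro t ht htδ
    have h1 : dist t 0 < δ0 := by
      rw [Real.dist_eq, sub_zero, abs_of_pos ht]
      calc t ≤ δ := htδ
        _ ≤ δ0 / 2 := min_le_left _ _
        _ < δ0 := by linarith
    have h2 := hδ0' (mem_Ioi.mpr ht) h1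
    rw [Real.dist_eq, sub_zero] at h2
    have h3 : (1 / t) * ∫ u in (0:ℝ)..t, g u ≤ ε' := (le_abs_self _).trans h2.le
    calc (∫ u in (0:ℝ)..t, g u) = t * ((1 / t) * ∫ u in (0:ℝ)..t, g u) := by
          field_simp
      _ ≤ t * ε' := by
          apply mul_le_mul_of_nonneg_left h3 ht.le
      _ = ε' * t := by ring
  set Atot : ℝ := ∫ u in (0:ℝ)..π, g u with hAtot
  have hAtot0 : 0 ≤ Atot := intervalIntegral.integral_nonneg hpi.le (fun u _ => hg0 u)
  obtain ⟨N1, hN1⟩ := exists_nat_ge (1 / δ)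
  obtain ⟨N2, hN2⟩ := exists_nat_ge (π ^ 2 * Atot / (δ ^ 2 * ε'))
  filter_upwards [eventually_ge_atTop (max (max N1 N2) 1)] with n hn
  have hn1 : 1 ≤ n := le_trans (le_max_right _ _) hn
  have hnpos : (0:ℝ) < n := by exact_mod_cast hn1
  have hinv : 1 / (n:ℝ) ≤ δ := by
    rw [div_le_iff₀ hnpos]
    have : (N1 : ℝ) ≤ n := by
      exact_mod_cast le_trans (le_max_left _ _) (le_trans (le_max_left _ _) hn)
    calc (1:ℝ) = (1/δ) * δ := by field_simp
      _ ≤ (N1:ℝ) * δ := by apply mul_le_mul_of_nonneg_right hN1 hδpos.le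
      _ ≤ δ * n := by rw [mul_comm]; exact mul_le_mul_of_nonneg_left this hδpos.le
  have htail : π ^ 2 * Atot / ((n:ℝ) * δ ^ 2) ≤ ε' := by
    have hN2n : (N2 : ℝ) ≤ n := by
      exact_mod_cast le_trans (le_max_right _ _) (le_trans (le_max_left _ _) hn)
    rw [div_le_iff₀ (by positivity)]
    have h1 : π ^ 2 * Atot / (δ ^ 2 * ε') ≤ (n:ℝ) := le_trans hN2 hN2n
    rw [div_le_iff₀ (by positivity)] at h1
    nlinarith [hε'.le, hδpos.le]
  -- split
  have hsplit : (∫ t in (0:ℝ)..π, Kr n t * g t)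
      = (∫ t in (0:ℝ)..(1/(n:ℝ)), Kr n t * g t)
        + (∫ t in (1/(n:ℝ))..δ, Kr n t * g t)
        + (∫ t in δ..π, Kr n t * g t) := by
    rw [intervalIntegral.integral_add_adjacent_intervals (hKgI n 0 (1/(n:ℝ))) (hKgI n (1/(n:ℝ)) δ),
      intervalIntegral.integral_add_adjacent_intervals (hKgI n 0 δ) (hKgI n δ π)]
  -- B1
  have hB1 : (∫ t in (0:ℝ)..(1/(n:ℝ)), Kr n t * g t) ≤ ε' := by
    have hmono : (∫ t in (0:ℝ)..(1/(n:ℝ)), Kr n t * g t)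
        ≤ ∫ t in (0:ℝ)..(1/(n:ℝ)), (n:ℝ) * g t := by
      apply intervalIntegral.integral_mono_on (by positivity) (hKgI n _ _)
        ((hgI _ _).const_mul _)
      intro t _
      exact mul_le_mul_of_nonneg_right (Kr_le n t) (hg0 t)
    rw [intervalIntegral.integral_const_mul] at hmono
    calc (∫ t in (0:ℝ)..(1/(n:ℝ)), Kr n t * g t)
        ≤ (n:ℝ) * ∫ t in (0:ℝ)..(1/(n:ℝ)), g t := hmono
      _ ≤ (n:ℝ) * (ε' * (1/(n:ℝ))) := by
          apply mul_le_mul_of_nonneg_left (hGδ _ (by positivity) hinv) hnpos.le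
      _ = ε' := by field_simp
  -- B3
  have hB3 : (∫ t in δ..π, Kr n t * g t) ≤ ε' := by
    have hmono : (∫ t in δ..π, Kr n t * g t)
        ≤ ∫ t in δ..π, (π ^ 2 / ((n:ℝ) * δ ^ 2)) * g t := by
      apply intervalIntegral.integral_mono_on hδπ (hKgI n _ _) ((hgI _ _).const_mul _)
      intro t ht
      have h1 : Kr n t ≤ π ^ 2 / ((n:ℝ) * t ^ 2) :=
        Kr_decay n hn1 t (lt_of_lt_of_le hδpos ht.1) ht.2
      have h2 : π ^ 2 / ((n:ℝ) * t ^ 2) ≤ π ^ 2 / ((n:ℝ) * δ ^ 2) := by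
        gcongr
        exact ht.1
      exact mul_le_mul_of_nonneg_right (h1.trans h2) (hg0 t)
    rw [intervalIntegral.integral_const_mul] at hmono
    have hsub : (∫ t in δ..π, g t) ≤ Atot := by
      have := hGmono δ π hδπ
      have h1 : Atot = (∫ u in (0:ℝ)..δ, g u) + ∫ u in δ..π, g u :=
        (intervalIntegral.integral_add_adjacent_intervals (hgI 0 δ) (hgI δ π)).symm
      have h2 : 0 ≤ ∫ u in (0:ℝ)..δ, g u :=
        intervalIntegral.integral_nonneg hδpos.le (fun u _ => hg0 u)
      linarith
    calc (∫ t in δ..π, Kr n t * g t)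
        ≤ π ^ 2 / ((n:ℝ) * δ ^ 2) * ∫ t in δ..π, g t := hmono
      _ ≤ π ^ 2 / ((n:ℝ) * δ ^ 2) * Atot := by
          apply mul_le_mul_of_nonneg_left hsub (by positivity)
      _ = π ^ 2 * Atot / ((n:ℝ) * δ ^ 2) := by ring
      _ ≤ ε' := htail
  -- B2 dyadic
  have hB2 : (∫ t in (1/(n:ℝ))..δ, Kr n t * g t) ≤ 4 * π ^ 2 * ε' := by
    set a : ℕ → ℝ := fun j => min ((2:ℝ) ^ j / n) δ with ha
    have ha0 : a 0 = 1 / (n:ℝ) := by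
      simp only [ha, pow_zero]
      exact min_eq_left hinv
    have hamem : ∀ j, 0 < a j ∧ a j ≤ δ := by
      intro j
      constructor
      · exact lt_min (by positivity) hδpos
      · exact min_le_right _ _
    have haJ : a (n + 4) = δ := by
      simp only [ha]
      apply min_eq_right
      have h2n : (n:ℝ) < 2 ^ n := by exact_mod_cast Nat.lt_two_pow_self (n := n)
      have : (16:ℝ) * n ≤ 2 ^ (n+4) := by
        rw [pow_add]
        norm_num
        nlinarith
      rw [le_div_iff₀ hnpos]
      calc δ * n ≤ π * n := by apply mul_le_mul_of_nonneg_right hδπ hnpos.le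
        _ ≤ 4 * n := by nlinarith [Real.pi_le_four]
        _ ≤ 16 * n := by nlinarith
        _ ≤ 2 ^ (n+4) := this
    have hint : ∀ k < n + 4, IntervalIntegrable (fun t => Kr n t * g t) volume (a k) (a (k+1)) :=
      fun k _ => hKgI n _ _
    have hsum := intervalIntegral.sum_integral_adjacent_intervals hint
    rw [ha0, haJ] at hsum
    rw [← hsum]
    have hpiece : ∀ j ∈ Finset.range (n + 4),
        (∫ t in (a j)..(a (j+1)), Kr n t * g t) ≤ 2 * π ^ 2 * ε' * (1/2) ^ j := by
      intro j _
      rcases le_or_gt δ ((2:ℝ) ^ j / n) with hc | hc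
      · have h1 : a j = δ := min_eq_right hc
        have h2 : a (j+1) = δ := by
          apply min_eq_right
          refine hc.trans ?_
          gcongr
          · norm_num
          · omega
        rw [h1, h2, intervalIntegral.integral_same]
        positivity
      · have h1 : a j = (2:ℝ) ^ j / n := min_eq_left hc.le
        have hajpos : 0 < a j := (hamem j).1
        have haj1 : a j ≤ a (j+1) := by
          simp only [ha]
          apply min_le_min _ le_rfl
          gcongr
          · norm_num
          · omega
        have hbound : ∀ t ∈ Set.Icc (a j) (a (j+1)), Kr n t * g t
            ≤ (π ^ 2 * n / 4 ^ j) * g t := by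
          intro t ht
          have htpos : 0 < t := lt_of_lt_of_le hajpos ht.1
          have htπ : t ≤ π := le_trans (le_trans ht.2 (hamem (j+1)).2) hδπ
          have h2 : Kr n t ≤ π ^ 2 / ((n:ℝ) * t ^ 2) := Kr_decay n hn1 t htpos htπ
          have h3 : π ^ 2 / ((n:ℝ) * t ^ 2) ≤ π ^ 2 * n / 4 ^ j := by
            rw [div_le_div_iff₀ (by positivity) (by positivity)]
            have h4 : a j ≤ t := ht.1
            rw [h1] at h4
            have h5 : (2:ℝ) ^ j ≤ t * n := by
              rw [div_le_iff₀ hnpos] at h4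
              exact h4
            have h6 : (4:ℝ) ^ j ≤ (t * n) ^ 2 := by
              have h7 : ((2:ℝ) ^ j) ^ 2 ≤ (t * n) ^ 2 :=
                pow_le_pow_left₀ (by positivity) h5 2
              calc (4:ℝ) ^ j = ((2:ℝ) ^ j) ^ 2 := by
                    rw [show (4:ℝ) = 2 ^ 2 by norm_num, ← pow_mul, mul_comm, pow_mul]
                _ ≤ (t * n) ^ 2 := h7
            calc π ^ 2 * 4 ^ j ≤ π ^ 2 * (t * n) ^ 2 :=
                  mul_le_mul_of_nonneg_left h6 (sq_nonneg π)
              _ = π ^ 2 * n * ((n:ℝ) * t ^ 2) := by ring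
          exact mul_le_mul_of_nonneg_right (h2.trans h3) (hg0 t)
        calc (∫ t in (a j)..(a (j+1)), Kr n t * g t)
            ≤ ∫ t in (a j)..(a (j+1)), (π ^ 2 * n / 4 ^ j) * g t := by
              apply intervalIntegral.integral_mono_on haj1 (hKgI n _ _)
                ((hgI _ _).const_mul _) hbound
          _ = (π ^ 2 * n / 4 ^ j) * ∫ t in (a j)..(a (j+1)), g t :=
              intervalIntegral.integral_const_mul _ _
          _ ≤ (π ^ 2 * n / 4 ^ j) * (ε' * (2 ^ (j+1) / n)) := by
              apply mul_le_mul_of_nonneg_left _ (by positivity)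
              have hup : (∫ t in (a j)..(a (j+1)), g t) ≤ ∫ u in (0:ℝ)..(a (j+1)), g u := by
                have h1' : (∫ u in (0:ℝ)..(a (j+1)), g u)
                    = (∫ u in (0:ℝ)..(a j), g u) + ∫ t in (a j)..(a (j+1)), g t :=
                  (intervalIntegral.integral_add_adjacent_intervals (hgI _ _) (hgI _ _)).symm
                have h2' : 0 ≤ ∫ u in (0:ℝ)..(a j), g u :=
                  intervalIntegral.integral_nonneg hajpos.le (fun u _ => hg0 u)
                linarith
              refine hup.trans ?_
              refine (hGδ (a (j+1)) (hamem (j+1)).1 (hamem (j+1)).2).trans ?_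
              apply mul_le_mul_of_nonneg_left _ hε'.le
              calc a (j+1) ≤ (2:ℝ) ^ (j+1) / n := min_le_left _ _
                _ = 2 ^ (j+1) / n := rfl
          _ = 2 * π ^ 2 * ε' * (1/2) ^ j := by
              have h8 : (4:ℝ) ^ j = (2:ℝ) ^ j * 2 ^ j := by
                rw [show (4:ℝ) = 2 * 2 by norm_num, mul_pow]
              have h9 : ((1:ℝ)/2) ^ j = 1 / 2 ^ j := by rw [div_pow, one_pow]
              rw [h9, h8, pow_succ]
              have h2j : ((2:ℝ) ^ j) ≠ 0 := by positivity
              field_simp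
              ring
    calc (∑ j ∈ Finset.range (n+4), ∫ t in (a j)..(a (j+1)), Kr n t * g t)
        ≤ ∑ j ∈ Finset.range (n+4), 2 * π ^ 2 * ε' * (1/2) ^ j :=
          Finset.sum_le_sum hpiece
      _ = 2 * π ^ 2 * ε' * ∑ j ∈ Finset.range (n+4), (1/2) ^ j := by
          rw [Finset.mul_sum]
      _ ≤ 2 * π ^ 2 * ε' * 2 := by
          apply mul_le_mul_of_nonneg_left _ (by positivity)
          rw [geom_sum_eq (by norm_num : (1/2 : ℝ) ≠ 1)]
          have : (0:ℝ) < (1/2) ^ (n+4) := by positivity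
          rw [show ((1:ℝ)/2 - 1) = -(1/2) by norm_num]
          rw [div_neg, neg_le]
          nlinarith
      _ = 4 * π ^ 2 * ε' := by ring
  -- combine
  have hI0 : 0 ≤ ∫ t in (0:ℝ)..π, Kr n t * g t :=
    intervalIntegral.integral_nonneg hpi.le (fun t _ => mul_nonneg (Kr_nonneg n t) (hg0 t))
  rw [Real.norm_eq_abs, abs_of_nonneg hI0]
  calc (∫ t in (0:ℝ)..π, Kr n t * g t) = _ := hsplit
    _ ≤ ε' + 4 * π ^ 2 * ε' + ε' := by linarith
    _ < ε := by
      have hq : ε' * (3 + 4 * π ^ 2) = ε := by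
        rw [hε'def]; field_simp
      ring_nf
      ring_nf at hq
      have hY : 0 < ε * (3 + π ^ 2 * 4)⁻¹ := by positivity
      linarith [hq, hY]

lemma fejer_continuous (n : ℕ) : Continuous (fejerKernel n) := by
  unfold fejerKernel
  apply continuous_finset_sum
  intro k _
  exact continuous_const.mul (Complex.continuous_exp.comp (by continuity))

end FejerAux

open FejerAux

/-- Pointwise Fejér summability: if `f ∈ L¹(T)`, `x ∈ T` and `L ∈ ℂ` satisfy
`(1/t) ∫_0^t |f(x+u) + f(x-u) - 2L| du → 0` as `t → 0⁺`, then `(K_n * f)(x) → L`,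
where `(K_n * f)(x) = (1/(2π)) ∫_{-π}^{π} K_n(t) f(x - t) dt`. -/
theorem fejer_summability_pointwise (f : ℝ → ℂ) (hper : Function.Periodic f (2 * π))
    (hf : IntegrableOn f (Ioc (-π) π)) (x : ℝ) (L : ℂ)
    (hx : Tendsto (fun t : ℝ => (1 / t) * ∫ u in (0 : ℝ)..t, ‖f (x + u) + f (x - u) - 2 * L‖)
      (nhdsWithin 0 (Ioi 0)) (nhds 0)) :
    Tendsto (fun n : ℕ => (1 / (2 * π) : ℝ) • ∫ t in (-π)..π, fejerKernel n t * f (x - t))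
      atTop (nhds L) := by
  have hpi := Real.pi_pos
  have hfI : ∀ a b : ℝ, IntervalIntegrable f volume a b := per_II hper hf
  have hxI : ∀ a b : ℝ, IntervalIntegrable (fun t => f (x - t)) volume a b := by
    intro a b
    simpa using ((hfI (x - b) (x - a)).comp_sub_left x).symm
  have hxI' : ∀ a b : ℝ, IntervalIntegrable (fun t => f (x + t)) volume a b := by
    intro a b
    simpa using (hfI (x + a) (x + b)).comp_add_left x
  set g : ℝ → ℝ := fun u => ‖f (x + u) + f (x - u) - 2 * L‖ with hgdef
  have hg0 : ∀ t, 0 ≤ g t := fun t => norm_nonneg _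
  have hgI : ∀ a b : ℝ, IntervalIntegrable g volume a b := by
    intro a b
    exact (((hxI' a b).add (hxI a b)).sub (intervalIntegrable_const)).norm
  have hcore := core g hg0 hgI hx
  set I : ℕ → ℝ := fun n => ∫ t in (0:ℝ)..π, Kr n t * g t with hIdef
  set S : ℕ → ℂ := fun n => (1 / (2 * π) : ℝ) • ∫ t in (-π)..π, fejerKernel n t * f (x - t)
    with hSdef
  -- Claim A
  have claimA : ∀ n : ℕ, 1 ≤ n → ‖S n - L‖ ≤ (1 / (2 * π)) * I n := by
    intro n hn
    set K := fejerKernel n with hK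
    have hKf : ∀ a b : ℝ, IntervalIntegrable (fun t => K t * f (x - t)) volume a b :=
      fun a b => (hxI a b).continuousOn_mul (fejer_continuous n).continuousOn
    have hKf' : ∀ a b : ℝ, IntervalIntegrable (fun t => K t * f (x + t)) volume a b :=
      fun a b => (hxI' a b).continuousOn_mul (fejer_continuous n).continuousOn
    have hKL : ∀ a b : ℝ, IntervalIntegrable (fun t => K t * L) volume a b :=
      fun a b => ((fejer_continuous n).mul continuous_const).intervalIntegrable a b
    have hW : ∀ a b : ℝ, IntervalIntegrable (fun t => K t * (f (x - t) - L)) volume a b := by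
      intro a b
      have h : (fun t => K t * (f (x - t) - L)) = fun t => K t * f (x - t) - K t * L := by
        funext t; ring
      rw [h]
      exact (hKf a b).sub (hKL a b)
    have hW' : ∀ a b : ℝ, IntervalIntegrable (fun t => K t * (f (x + t) - L)) volume a b := by
      intro a b
      have h : (fun t => K t * (f (x + t) - L)) = fun t => K t * f (x + t) - K t * L := by
        funext t; ring
      rw [h]
      exact (hKf' a b).sub (hKL a b)
    -- step 1
    have e1 : (∫ t in (-π)..π, K t * f (x - t)) - ((2 * π : ℝ) : ℂ) * L
        = ∫ t in (-π)..π, K t * (f (x - t) - L) := by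
      have h2 : (∫ t in (-π)..π, K t * (f (x - t) - L))
          = (∫ t in (-π)..π, K t * f (x - t)) - ∫ t in (-π)..π, K t * L := by
        rw [← intervalIntegral.integral_sub (hKf _ _) (hKL _ _)]
        congr 1; funext t; ring
      rw [h2, intervalIntegral.integral_mul_const, integral_fejer n]
      push_cast
      ring
    -- step 2 : fold to [0, π]
    have e2 : (∫ t in (-π)..π, K t * (f (x - t) - L))
        = ∫ t in (0:ℝ)..π, K t * (f (x + t) + f (x - t) - 2 * L) := by
      have hsplit : (∫ t in (-π)..π, K t * (f (x - t) - L))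
          = (∫ t in (-π)..(0:ℝ), K t * (f (x - t) - L))
            + ∫ t in (0:ℝ)..π, K t * (f (x - t) - L) :=
        (intervalIntegral.integral_add_adjacent_intervals (hW _ _) (hW _ _)).symm
      have hneg : (∫ t in (-π)..(0:ℝ), K t * (f (x - t) - L))
          = ∫ t in (0:ℝ)..π, K t * (f (x + t) - L) := by
        have h1 : (∫ t in (0:ℝ)..π, K (-t) * (f (x - (-t)) - L))
            = ∫ t in (-π)..(-(0:ℝ)), K t * (f (x - t) - L) :=
          intervalIntegral.integral_comp_neg (fun t => K t * (f (x - t) - L))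
        rw [neg_zero] at h1
        rw [← h1]
        congr 1
        funext t
        simp only [hK]
        rw [fejer_even n t, sub_neg_eq_add]
      rw [hsplit, hneg, ← intervalIntegral.integral_add (hW' 0 π) (hW 0 π)]
      congr 1
      funext t
      ring
    -- step 3
    have hLc : (1 / (2 * π) : ℝ) • (((2 * π : ℝ) : ℂ) * L) = L := by
      have h1 : (1 / (2*π)) * (2*π) = (1:ℝ) := one_div_mul_cancel (by positivity)
      rw [Complex.real_smul, ← mul_assoc, ← Complex.ofReal_mul, h1, Complex.ofReal_one, one_mul]
    have e3 : S n - L = (1 / (2 * π) : ℝ) •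
        ∫ t in (0:ℝ)..π, K t * (f (x + t) + f (x - t) - 2 * L) := by
      rw [← e2, ← e1, smul_sub, hLc, hSdef]
    rw [e3]
    rw [norm_smul, Real.norm_eq_abs, abs_of_pos (by positivity)]
    apply mul_le_mul_of_nonneg_left _ (by positivity)
    refine (intervalIntegral.norm_integral_le_integral_norm hpi.le).trans ?_
    apply le_of_eq
    apply intervalIntegral.integral_congr
    intro t _
    show ‖K t * (f (x + t) + f (x - t) - 2 * L)‖ = Kr n t * g t
    simp only [hK]
    rw [norm_mul, fejer_eq n hn t, Complex.norm_real, Real.norm_eq_abs,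
      abs_of_nonneg (Kr_nonneg n t)]
  -- assemble
  rw [tendsto_iff_norm_sub_tendsto_zero]
  apply squeeze_zero' (Eventually.of_forall fun n => norm_nonneg _)
  · filter_upwards [eventually_ge_atTop 1] with n hn
    exact claimA n hn
  · have := hcore.const_mul (1 / (2 * π))
    simpa using this
end
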